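/- arXiv:1806.06908 — 8 statements merged into one kernel-verified Lean document; each statement's English description precedes it below -/
import Mathlib

section
/- Let t^M = (t^M_0,…,t^M_{M−1}) denote the equalized solution with uniform weights and M levels. Then for every δ > 0 there exists N such that for all M ≥ N, max_{1 ≤ k ≤ M−1} ( t^M_k − t^M_{k−1} ) < δ. -/
/-- The pairwise large-deviations rate
`r_{g,h}(p,q) = -(g+h)·log[(1-p)^{g/(g+h)}·(1-q)^{h/(g+h)} + p^{g/(g+h)}·q^{h/(g+h)}]`. -/
noncomputable def pairRate (g h p q : ℝ) : ℝ :=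
  -(g + h) *
    Real.log ((1 - p) ^ (g / (g + h)) * (1 - q) ^ (h / (g + h))
      + p ^ (g / (g + h)) * q ^ (h / (g + h)))

/-- The `i`-th rate (for `1 ≤ i ≤ M-1`) of a level vector `t` with weights `g`:
`r₁ = -g₁·log(1-t₁)`, `rᵢ = r_{g_{i-1},g_i}(t_{i-1},t_i)` for `2 ≤ i ≤ M-2`, and
`r_{M-1} = -g_{M-2}·log(t_{M-2})`. -/
noncomputable def rateAt (M : ℕ) (g t : ℕ → ℝ) (i : ℕ) : ℝ :=
  if i = 1 then -(g 1) * Real.log (1 - t 1)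
  else if i = M - 1 then -(g (M - 2)) * Real.log (t (M - 2))
  else pairRate (g (i - 1)) (g i) (t (i - 1)) (t i)

/-- `t` is an equalized solution with `M` levels for the weights `g`, with common rate `r`:
`t₀ = 0 < t₁ < ⋯ < t_{M-2} < 1 = t_{M-1}` and all of the `M-1` rates equal `r`. -/
def IsEqualizedWithRate (M : ℕ) (g t : ℕ → ℝ) (r : ℝ) : Prop :=
  t 0 = 0 ∧ t (M - 1) = 1 ∧ (∀ i, i < M - 1 → t i < t (i + 1)) ∧
    ∀ i, 1 ≤ i → i ≤ M - 1 → rateAt M g t i = r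

/-- `t` is an equalized solution with `M` levels for the weights `g`. -/
def IsEqualizedSol (M : ℕ) (g t : ℕ → ℝ) : Prop :=
  ∃ r, IsEqualizedWithRate M g t r

private lemma sqrt_prod_ge (x y : ℝ) (hx : 0 ≤ x) (hxy : x ≤ y) :
    x ≤ Real.sqrt y * Real.sqrt x := by
  calc x = Real.sqrt x * Real.sqrt x := (Real.mul_self_sqrt hx).symm
  _ ≤ Real.sqrt y * Real.sqrt x :=
      mul_le_mul_of_nonneg_right (Real.sqrt_le_sqrt hxy) (Real.sqrt_nonneg x)

private lemma S_lb (p q : ℝ) (hp : 0 ≤ p) (hpq : p ≤ q) (hq : q ≤ 1) :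
    1 - (q - p) ≤ Real.sqrt (1 - p) * Real.sqrt (1 - q) + Real.sqrt p * Real.sqrt q := by
  have h1 : (1 - q) ≤ Real.sqrt (1 - p) * Real.sqrt (1 - q) :=
    sqrt_prod_ge (1 - q) (1 - p) (by linarith) (by linarith)
  have h2 : p ≤ Real.sqrt q * Real.sqrt p := sqrt_prod_ge p q hp hpq
  rw [mul_comm (Real.sqrt q)] at h2
  linarith

private lemma key_ineq (p q : ℝ) (hp : 0 ≤ p) (hpq : p ≤ q) (hq : q ≤ 1) :
    (q - p) ^ 2 ≤ 4 * (1 - (Real.sqrt (1 - p) * Real.sqrt (1 - q) + Real.sqrt p * Real.sqrt q)) := by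
  set a := Real.sqrt p with ha_def
  set b := Real.sqrt q with hb_def
  set a' := Real.sqrt (1 - q) with ha'_def
  set b' := Real.sqrt (1 - p) with hb'_def
  have ha2 : a ^ 2 = p := Real.sq_sqrt hp
  have hb2 : b ^ 2 = q := Real.sq_sqrt (le_trans hp hpq)
  have ha'2 : a' ^ 2 = 1 - q := Real.sq_sqrt (by linarith)
  have hb'2 : b' ^ 2 = 1 - p := Real.sq_sqrt (by linarith)
  have hab : a ≤ b := Real.sqrt_le_sqrt hpq
  have ha'b' : a' ≤ b' := Real.sqrt_le_sqrt (by linarith)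
  have ha0 : 0 ≤ a := Real.sqrt_nonneg _
  have ha'0 : 0 ≤ a' := Real.sqrt_nonneg _
  have hb1 : b ≤ 1 := Real.sqrt_le_one.2 hq
  have hb'1 : b' ≤ 1 := Real.sqrt_le_one.2 (by linarith)
  -- q - p = (b-a)(b+a) = (b'-a')(b'+a'); sums of squares equal 2
  have key : (q - p) ^ 2 = ((b - a) * (b + a)) * ((b' - a') * (b' + a')) := by
    have e1 : (b - a) * (b + a) = q - p := by nlinarith
    have e2 : (b' - a') * (b' + a') = q - p := by nlinarith
    rw [e1, e2]; ring
  nlinarith [sq_nonneg ((b - a) - (b' - a')), mul_nonneg (sub_nonneg.2 hab) (sub_nonneg.2 ha'b'),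
    mul_le_mul (show b + a ≤ 2 by linarith) (show b' + a' ≤ 2 by linarith)
      (by linarith) (by norm_num : (0:ℝ) ≤ 2),
    mul_le_mul_of_nonneg_left
      (mul_le_mul (show b + a ≤ 2 by linarith) (show b' + a' ≤ 2 by linarith)
        (by linarith) (by norm_num : (0:ℝ) ≤ 2))
      (mul_nonneg (sub_nonneg.2 hab) (sub_nonneg.2 ha'b'))]

set_option maxHeartbeats 1600000 in
/-- **The maximal gap between consecutive levels vanishes.**
If `t^M` is the equalized solution with uniform weights and `M` levels, then for every
`δ > 0` there is `N` such that for all `M ≥ N`,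
`max_{1 ≤ k ≤ M-1} (t^M_k - t^M_{k-1}) < δ`. -/
theorem equalized_gaps_tendsto_zero :
    ∀ δ : ℝ, 0 < δ → ∃ N : ℕ, ∀ M : ℕ, N ≤ M →
      ∀ t : ℕ → ℝ, IsEqualizedSol M (fun _ => (1 : ℝ)) t →
        ∀ k, 1 ≤ k → k ≤ M - 1 → t k - t (k - 1) < δ := by
  intro δ hδ
  set c : ℝ := min (δ / 4) (δ ^ 2 / 8) with hc_def
  have hc : 0 < c := lt_min (by linarith) (by positivity)
  set ε : ℝ := 1 - Real.exp (-c) with hε_def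
  have hexp1 : Real.exp (-c) < 1 := by
    calc Real.exp (-c) < Real.exp 0 := Real.exp_lt_exp.2 (by linarith)
    _ = 1 := Real.exp_zero
  have hε : 0 < ε := by simp only [hε_def]; linarith
  refine ⟨max 4 (⌈1 / ε⌉₊ + 2), fun M hM t ht => ?_⟩
  obtain ⟨r, h0, h1, hinc, hrate⟩ := ht
  have hM4 : 4 ≤ M := le_trans (le_max_left _ _) hM
  have hMc : (⌈1 / ε⌉₊ + 2 : ℕ) ≤ M := le_trans (le_max_right _ _) hM
  have hM1pos : (0:ℝ) < (M:ℝ) - 1 := by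
    have : (4:ℝ) ≤ (M:ℝ) := by exact_mod_cast hM4
    linarith
  have hMε : 1 / ((M:ℝ) - 1) ≤ ε := by
    have h1' : 1 / ε ≤ (⌈1 / ε⌉₊ : ℝ) := Nat.le_ceil _
    have h2' : ((⌈1 / ε⌉₊ + 2 : ℕ) : ℝ) ≤ (M:ℝ) := by exact_mod_cast hMc
    push_cast at h2'
    rw [div_le_iff₀ hM1pos]
    rw [div_le_iff₀ hε] at h1'
    nlinarith
  -- monotonicity
  have mono : ∀ i j : ℕ, i ≤ j → j ≤ M - 1 → t i ≤ t j := by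
    intro i j hij
    induction j, hij using Nat.le_induction with
    | base => intro _; exact le_refl _
    | succ n hn ih =>
      intro h
      exact le_trans (ih (by omega)) (le_of_lt (hinc n (by omega)))
  have ht1pos : 0 < t 1 := by
    have := hinc 0 (by omega)
    rw [h0] at this; exact this
  have htM2lt1 : t (M - 2) < 1 := by
    have := hinc (M - 2) (by omega)
    have e : M - 2 + 1 = M - 1 := by omega
    rw [e, h1] at this; exact this
  -- a small gap exists
  have hsum : ∑ i ∈ Finset.range (M - 1), (t (i + 1) - t i) = 1 := by
    rw [Finset.sum_range_sub, h1, h0]; ring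
  have hex : ∃ i, i < M - 1 ∧ t (i + 1) - t i ≤ 1 / ((M:ℝ) - 1) := by
    by_contra hcon
    push_neg at hcon
    have hlt : ∑ i ∈ Finset.range (M - 1), (1 / ((M:ℝ) - 1)) <
        ∑ i ∈ Finset.range (M - 1), (t (i + 1) - t i) := by
      apply Finset.sum_lt_sum_of_nonempty
      · exact Finset.nonempty_range_iff.2 (by omega)
      · intro i hi
        exact hcon i (Finset.mem_range.1 hi)
    rw [hsum, Finset.sum_const, Finset.card_range] at hlt
    have hcast : ((M - 1 : ℕ) : ℝ) = (M:ℝ) - 1 := by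
      have : 1 ≤ M := by omega
      push_cast [this]; ring
    rw [nsmul_eq_mul, hcast, mul_one_div, div_self (ne_of_gt hM1pos)] at hlt
    linarith
  -- the common rate is at most 2c
  have hrbound : r ≤ 2 * c := by
    obtain ⟨i0, hi0, hgap0⟩ := hex
    have hgapε : t (i0 + 1) - t i0 ≤ ε := le_trans hgap0 hMε
    have hk1 : 1 ≤ i0 + 1 := by omega
    have hk2 : i0 + 1 ≤ M - 1 := by omega
    have hr := hrate (i0 + 1) hk1 hk2
    by_cases hc1 : i0 + 1 = 1
    · -- first gap
      have hi00 : i0 = 0 := by omega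
      rw [hc1] at hr
      simp only [rateAt] at hr
      simp only [if_true] at hr
      have ht1ε : t 1 ≤ ε := by rw [hi00, h0] at hgapε; simpa using hgapε
      have hpos : Real.exp (-c) ≤ 1 - t 1 := by simp only [hε_def] at ht1ε; linarith
      have := Real.log_le_log (Real.exp_pos _) hpos
      rw [Real.log_exp] at this
      nlinarith
    · by_cases hc2 : i0 + 1 = M - 1
      · -- last gap
        have hi0M : i0 = M - 2 := by omega
        rw [hc2] at hr
        simp only [rateAt] at hr
        rw [if_neg (show ¬ (M - 1 = 1) by omega)] at hr
        simp only [if_true] at hr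
        have htM2 : 1 - t (M - 2) ≤ ε := by
          rw [hi0M, show M - 2 + 1 = M - 1 by omega, h1] at hgapε; linarith
        have hpos : Real.exp (-c) ≤ t (M - 2) := by simp only [hε_def] at htM2; linarith
        have := Real.log_le_log (Real.exp_pos _) hpos
        rw [Real.log_exp] at this
        nlinarith
      · -- interior gap
        simp only [rateAt] at hr
        rw [if_neg hc1, if_neg hc2] at hr
        simp only [pairRate] at hr
        set p := t ((i0 + 1) - 1) with hp_def
        set q := t (i0 + 1) with hq_def
        have hpe : p = t i0 := by rw [hp_def]; congr 1
        have hp0 : 0 ≤ p := by rw [hpe]; rw [← h0]; exact mono 0 i0 (by omega) (by omega)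
        have hpq : p ≤ q := by rw [hpe]; exact le_of_lt (hinc i0 hi0)
        have hq1 : q ≤ 1 := by rw [← h1]; exact mono (i0 + 1) (M - 1) hk2 (le_refl _)
        have hgε : q - p ≤ ε := by rw [hpe]; exact hgapε
        have hS : Real.exp (-c) ≤
            Real.sqrt (1 - p) * Real.sqrt (1 - q) + Real.sqrt p * Real.sqrt q := by
          have := S_lb p q hp0 hpq hq1
          simp only [hε_def] at hgε
          linarith
        have hrw : ((1:ℝ) / (1 + 1)) = (1/2 : ℝ) := by norm_num
        rw [hrw, ← Real.sqrt_eq_rpow, ← Real.sqrt_eq_rpow, ← Real.sqrt_eq_rpow,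
          ← Real.sqrt_eq_rpow] at hr
        have hlog := Real.log_le_log (Real.exp_pos (-c)) hS
        rw [Real.log_exp] at hlog
        nlinarith
  have hc2δ : 2 * c ≤ δ / 2 := by
    have : c ≤ δ / 4 := min_le_left _ _
    linarith
  have hc2δ2 : 4 * c ≤ δ ^ 2 / 2 := by
    have : c ≤ δ ^ 2 / 8 := min_le_right _ _
    linarith
  -- now bound every gap
  intro k hk1 hk2
  have hr := hrate k hk1 hk2
  by_cases hck : k = 1
  · subst hck
    simp only [rateAt] at hr
    simp only [if_true] at hr
    have ht1lt1 : t 1 < 1 := lt_of_le_of_lt (mono 1 (M - 2) (by omega) (by omega)) htM2lt1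
    have hlog : Real.log (1 - t 1) = -r := by linarith
    have := Real.exp_log (show (0:ℝ) < 1 - t 1 by linarith)
    rw [hlog] at this
    have hexp := Real.add_one_le_exp (-r)
    simp only [show (1:ℕ) - 1 = 0 from rfl, h0]
    nlinarith
  · by_cases hckM : k = M - 1
    · subst hckM
      simp only [rateAt] at hr
      rw [if_neg (show ¬ (M - 1 = 1) by omega)] at hr
      simp only [if_true] at hr
      have htM2pos : 0 < t (M - 2) :=
        lt_of_lt_of_le ht1pos (mono 1 (M - 2) (by omega) (by omega))
      have hlog : Real.log (t (M - 2)) = -r := by linarith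
      have := Real.exp_log htM2pos
      rw [hlog] at this
      have hexp := Real.add_one_le_exp (-r)
      rw [show M - 1 - 1 = M - 2 by omega, h1]
      nlinarith
    · -- interior
      simp only [rateAt] at hr
      rw [if_neg hck, if_neg hckM] at hr
      simp only [pairRate] at hr
      set p := t (k - 1) with hp_def
      set q := t k with hq_def
      have hk1' : 1 ≤ k - 1 := by omega
      have hp0 : 0 < p := lt_of_lt_of_le ht1pos (mono 1 (k - 1) hk1' (by omega))
      have hpq : p ≤ q := by
        have := hinc (k - 1) (by omega)
        rw [show k - 1 + 1 = k by omega] at this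
        exact le_of_lt this
      have hq1 : q ≤ 1 := by rw [← h1]; exact mono k (M - 1) hk2 (le_refl _)
      have hrw : ((1:ℝ) / (1 + 1)) = (1/2 : ℝ) := by norm_num
      rw [hrw, ← Real.sqrt_eq_rpow, ← Real.sqrt_eq_rpow, ← Real.sqrt_eq_rpow,
        ← Real.sqrt_eq_rpow] at hr
      set S := Real.sqrt (1 - p) * Real.sqrt (1 - q) + Real.sqrt p * Real.sqrt q with hS_def
      have hSpos : 0 < S := by
        have hlb := S_lb p q (le_of_lt hp0) hpq hq1
        have : q - p < 1 := by linarith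
        linarith
      have hlogS : Real.log S = -(r / 2) := by linarith
      have hSexp : S = Real.exp (-(r / 2)) := by
        rw [← hlogS, Real.exp_log hSpos]
      have hexp := Real.add_one_le_exp (-(r / 2))
      have hki := key_ineq p q (le_of_lt hp0) hpq hq1
      rw [← hS_def, hSexp] at hki
      -- (q - p)^2 ≤ 4 (1 - exp(-r/2)) ≤ 2 r ≤ 4c ≤ δ²/2 < δ²
      have hsq : (q - p) ^ 2 < δ ^ 2 := by nlinarith
      nlinarith
end

section
/- Let M ≥ 3 and let g₁ ≤ g₂ ≤ ⋯ ≤ g_{M−2} be positive nondecreasing weights. Then the equalized solution t* = (t*₀,…,t*_{M−1}) for these weights satisfies t*_{M−2} ≥ 1 − 1/(M−1). -/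
open Real

/-- Two-point concavity of the weighted geometric mean `(x, y) ↦ x^a * y^(1-a)`. -/
lemma amgm2 (a w x₁ y₁ x₂ y₂ : ℝ) (ha : 0 ≤ a) (ha1 : a ≤ 1)
    (hw : 0 ≤ w) (hw1 : w ≤ 1)
    (hx₁ : 0 ≤ x₁) (hy₁ : 0 ≤ y₁) (hx₂ : 0 ≤ x₂) (hy₂ : 0 ≤ y₂)
    (hX : 0 < w * x₁ + (1 - w) * x₂) (hY : 0 < w * y₁ + (1 - w) * y₂) :
    w * (x₁ ^ a * y₁ ^ (1 - a)) + (1 - w) * (x₂ ^ a * y₂ ^ (1 - a))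
      ≤ (w * x₁ + (1 - w) * x₂) ^ a * (w * y₁ + (1 - w) * y₂) ^ (1 - a) := by
  set X := w * x₁ + (1 - w) * x₂ with hXdef
  set Y := w * y₁ + (1 - w) * y₂ with hYdef
  have hXa : (0:ℝ) < X ^ a := rpow_pos_of_pos hX a
  have hYa : (0:ℝ) < Y ^ (1 - a) := rpow_pos_of_pos hY (1 - a)
  have key : ∀ x y : ℝ, 0 ≤ x → 0 ≤ y →
      x ^ a * y ^ (1 - a) ≤ X ^ a * Y ^ (1 - a) * (a * (x / X) + (1 - a) * (y / Y)) := by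
    intro x y hx hy
    have h := Real.geom_mean_le_arith_mean2_weighted (w₁ := a) (w₂ := 1 - a)
      (p₁ := x / X) (p₂ := y / Y) ha (by linarith)
      (div_nonneg hx hX.le) (div_nonneg hy hY.le) (by ring)
    have e : (x / X) ^ a * (y / Y) ^ (1 - a) = x ^ a * y ^ (1 - a) / (X ^ a * Y ^ (1 - a)) := by
      rw [Real.div_rpow hx hX.le, Real.div_rpow hy hY.le]; ring
    rw [e, div_le_iff₀ (by positivity)] at h
    nlinarith [h]
  have h1 := key x₁ y₁ hx₁ hy₁
  have h2 := key x₂ y₂ hx₂ hy₂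
  have comb : w * (X ^ a * Y ^ (1 - a) * (a * (x₁ / X) + (1 - a) * (y₁ / Y)))
      + (1 - w) * (X ^ a * Y ^ (1 - a) * (a * (x₂ / X) + (1 - a) * (y₂ / Y)))
      = X ^ a * Y ^ (1 - a) := by
    have hx : w * x₁ / X + (1 - w) * x₂ / X = 1 := by
      rw [← add_div, ← hXdef, div_self hX.ne']
    have hy : w * y₁ / Y + (1 - w) * y₂ / Y = 1 := by
      rw [← add_div, ← hYdef, div_self hY.ne']
    have : a * (w * x₁ / X + (1 - w) * x₂ / X) + (1 - a) * (w * y₁ / Y + (1 - w) * y₂ / Y) = 1 := by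
      rw [hx, hy]; ring
    calc w * (X ^ a * Y ^ (1 - a) * (a * (x₁ / X) + (1 - a) * (y₁ / Y)))
        + (1 - w) * (X ^ a * Y ^ (1 - a) * (a * (x₂ / X) + (1 - a) * (y₂ / Y)))
        = X ^ a * Y ^ (1 - a) *
          (a * (w * x₁ / X + (1 - w) * x₂ / X) + (1 - a) * (w * y₁ / Y + (1 - w) * y₂ / Y)) := by
          ring
      _ = X ^ a * Y ^ (1 - a) := by rw [this, mul_one]
  calc w * (x₁ ^ a * y₁ ^ (1 - a)) + (1 - w) * (x₂ ^ a * y₂ ^ (1 - a))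
      ≤ w * (X ^ a * Y ^ (1 - a) * (a * (x₁ / X) + (1 - a) * (y₁ / Y)))
        + (1 - w) * (X ^ a * Y ^ (1 - a) * (a * (x₂ / X) + (1 - a) * (y₂ / Y))) :=
        add_le_add (mul_le_mul_of_nonneg_left h1 hw)
          (mul_le_mul_of_nonneg_left h2 (by linarith))
    _ = X ^ a * Y ^ (1 - a) := comb

/-- Lower bound for the Chernoff-type sum: for `0 < a ≤ 1/2`, `0 < p ≤ q < 1`,
`(1-p)^a (1-q)^(1-a) + p^a q^(1-a) ≥ (1-(q-p))^(1-a)`. -/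
lemma S_lower (a p q : ℝ) (ha : 0 < a) (hah : a ≤ 1/2) (hp : 0 < p) (hpq : p ≤ q) (hq : q < 1) :
    (1 - (q - p)) ^ (1 - a) ≤ (1 - p) ^ a * (1 - q) ^ (1 - a) + p ^ a * q ^ (1 - a) := by
  have ha1 : a ≤ 1 := by linarith
  set s : ℝ := 1 - (q - p) with hs
  have hs0 : 0 < s := by simp only [hs]; nlinarith
  have hs1 : s ≤ 1 := by simp only [hs]; linarith
  set w : ℝ := p / s with hw
  have hw0 : 0 ≤ w := by positivity
  have hws : w * s = p := div_mul_cancel₀ p hs0.ne'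
  have hw1 : w ≤ 1 := by
    rw [hw, div_le_one hs0]; simp only [hs]; linarith
  -- first term
  have hX1 : w * (1 - s) + (1 - w) * 1 = 1 - p := by
    have : w * (1 - s) + (1 - w) * 1 = 1 - w * s := by ring
    rw [this, hws]
  have hY1 : w * 0 + (1 - w) * s = 1 - q := by
    have : w * 0 + (1 - w) * s = s - w * s := by ring
    rw [this, hws]; simp only [hs]; ring
  have T1 : (1 - w) * s ^ (1 - a) ≤ (1 - p) ^ a * (1 - q) ^ (1 - a) := by
    have h := amgm2 a w (1 - s) 0 1 s ha.le ha1 hw0 hw1 (by linarith) le_rfl zero_le_one hs0.le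
      (by rw [hX1]; linarith) (by rw [hY1]; linarith)
    rw [hX1, hY1] at h
    have hz : (0:ℝ) ^ (1 - a) = 0 := Real.zero_rpow (by linarith)
    rw [hz, Real.one_rpow] at h
    calc (1 - w) * s ^ (1 - a) = w * ((1 - s) ^ a * 0) + (1 - w) * (1 * s ^ (1 - a)) := by ring
      _ ≤ _ := h
  -- second term
  have hX2 : w * s + (1 - w) * 0 = p := by rw [mul_zero, add_zero, hws]
  have hY2 : w * 1 + (1 - w) * (1 - s) = q := by
    have : w * 1 + (1 - w) * (1 - s) = 1 - s + w * s := by ring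
    rw [this, hws]; simp only [hs]; ring
  have T2 : w * s ^ a ≤ p ^ a * q ^ (1 - a) := by
    have h := amgm2 a w s 1 0 (1 - s) ha.le ha1 hw0 hw1 hs0.le zero_le_one le_rfl (by linarith)
      (by rw [hX2]; exact hp) (by rw [hY2]; linarith)
    rw [hX2, hY2] at h
    have hz : (0:ℝ) ^ a = 0 := Real.zero_rpow ha.ne'
    rw [hz, Real.one_rpow] at h
    calc w * s ^ a = w * (s ^ a * 1) + (1 - w) * (0 * (1 - s) ^ (1 - a)) := by ring
      _ ≤ _ := h
  have hpow : s ^ (1 - a) ≤ s ^ a :=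
    Real.rpow_le_rpow_of_exponent_ge hs0 hs1 (by linarith)
  calc s ^ (1 - a) = (1 - w) * s ^ (1 - a) + w * s ^ (1 - a) := by ring
    _ ≤ (1 - w) * s ^ (1 - a) + w * s ^ a := by nlinarith
    _ ≤ (1 - p) ^ a * (1 - q) ^ (1 - a) + p ^ a * q ^ (1 - a) := add_le_add T1 T2

/-- The pairwise rate is bounded by `-h·log(1 - gap)` when `g ≤ h`. -/
lemma pairRate_le (g h p q : ℝ) (hg : 0 < g) (hgh : g ≤ h) (hp : 0 < p) (hpq : p ≤ q)
    (hq : q < 1) :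
    pairRate g h p q ≤ -h * Real.log (1 - (q - p)) := by
  have hn : (0:ℝ) < g + h := by linarith
  set a : ℝ := g / (g + h) with hadef
  have ha : 0 < a := div_pos hg hn
  have hah : a ≤ 1/2 := by rw [hadef, div_le_iff₀ hn]; linarith
  have h1a : 1 - a = h / (g + h) := by
    rw [hadef]
    field_simp
    ring
  have hd : 0 < 1 - (q - p) := by nlinarith
  have hS := S_lower a p q ha hah hp hpq hq
  have hSpos : 0 < (1 - p) ^ a * (1 - q) ^ (1 - a) + p ^ a * q ^ (1 - a) :=
    lt_of_lt_of_le (rpow_pos_of_pos hd _) hS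
  have hlog : Real.log ((1 - (q - p)) ^ (1 - a))
      ≤ Real.log ((1 - p) ^ a * (1 - q) ^ (1 - a) + p ^ a * q ^ (1 - a)) :=
    Real.log_le_log (rpow_pos_of_pos hd _) hS
  rw [Real.log_rpow hd] at hlog
  have hrw : pairRate g h p q
      = -(g + h) * Real.log ((1 - p) ^ a * (1 - q) ^ (1 - a) + p ^ a * q ^ (1 - a)) := by
    rw [pairRate, ← hadef, ← h1a]
  rw [hrw]
  have hcoef : (g + h) * ((1 - a) * Real.log (1 - (q - p))) = h * Real.log (1 - (q - p)) := by
    rw [h1a]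
    field_simp
  have h2 := mul_le_mul_of_nonneg_left hlog hn.le
  rw [hcoef] at h2
  linarith

/-- **Lower bound on the last level for nondecreasing weights.**
For `M ≥ 3` and positive nondecreasing weights `g₁ ≤ ⋯ ≤ g_{M-2}`, the equalized solution
satisfies `t*_{M-2} ≥ 1 - 1/(M-1)`. -/

theorem equalized_last_level_lower_bound
    (M : ℕ) (hM : 3 ≤ M) (g : ℕ → ℝ)
    (hg : ∀ i, 1 ≤ i → i ≤ M - 2 → 0 < g i)
    (hmono : ∀ i j, 1 ≤ i → i ≤ j → j ≤ M - 2 → g i ≤ g j)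
    (t : ℕ → ℝ) (ht : IsEqualizedSol M g t) :
    1 - 1 / ((M : ℝ) - 1) ≤ t (M - 2) := by
  obtain ⟨r, h0, h1, hinc, hrate⟩ := ht
  -- monotonicity of t
  have tmono : ∀ k, k ≤ M - 1 → ∀ i, i ≤ k → t i ≤ t k := by
    intro k
    induction k with
    | zero => intro _ i hi; rw [Nat.le_zero.mp hi]
    | succ n ih =>
      intro hk i hi
      rcases Nat.eq_or_lt_of_le hi with h | h
      · rw [h]
      · exact le_trans (ih (by omega) i (Nat.lt_succ_iff.mp h))
          (le_of_lt (hinc n (by omega)))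
  have t1pos : 0 < t 1 := by have := hinc 0 (by omega); rwa [h0] at this
  have tM2lt1 : t (M - 2) < 1 := by
    have := hinc (M - 2) (by omega)
    rwa [show M - 2 + 1 = M - 1 by omega, h1] at this
  have tM2pos : 0 < t (M - 2) :=
    lt_of_lt_of_le t1pos (tmono (M - 2) (by omega) 1 (by omega))
  have hKneg : Real.log (t (M - 2)) ≤ 0 := Real.log_nonpos tM2pos.le tM2lt1.le
  have hrN : -(g (M - 2)) * Real.log (t (M - 2)) = r := by
    have h := hrate (M - 1) (by omega) le_rfl
    rwa [rateAt, if_neg (by omega), if_pos rfl] at h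
  have hgM2 : 0 < g (M - 2) := hg (M - 2) (by omega) le_rfl
  -- the key claim : every gap is at least 1 - t (M-2)
  have claim : ∀ j, 1 ≤ j → j ≤ M - 1 → 1 - t (M - 2) ≤ t j - t (j - 1) := by
    intro j hj1 hjM
    rcases eq_or_lt_of_le hjM with hjeq | hjlt
    · -- last gap
      rw [hjeq, h1, show M - 1 - 1 = M - 2 by omega]
    · rcases Nat.eq_or_lt_of_le hj1 with hj1eq | hj1lt
      · -- first gap
        have hr1 : -(g 1) * Real.log (1 - t 1) = r := by
          have h := hrate 1 (by omega) (by omega)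
          rwa [rateAt, if_pos rfl] at h
        have hg1 : 0 < g 1 := hg 1 le_rfl (by omega)
        have hg1le : g 1 ≤ g (M - 2) := hmono 1 (M - 2) le_rfl (by omega) le_rfl
        have ht1lt1 : t 1 < 1 :=
          lt_of_le_of_lt (tmono (M - 2) (by omega) 1 (by omega)) tM2lt1
        have hLK : Real.log (1 - t 1) ≤ Real.log (t (M - 2)) := by
          have hineq : g 1 * (-Real.log (t (M - 2))) ≤ g 1 * (-Real.log (1 - t 1)) := by
            nlinarith [mul_nonneg (sub_nonneg.mpr hg1le) (neg_nonneg.mpr hKneg)]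
          nlinarith
        have := Real.exp_le_exp.mpr hLK
        rw [Real.exp_log (by linarith), Real.exp_log tM2pos] at this
        rw [← hj1eq, h0]
        linarith
      · -- middle gaps : 2 ≤ j ≤ M - 2
        have hj2 : 2 ≤ j := hj1lt
        have hjM2 : j ≤ M - 2 := by omega
        have hrj : pairRate (g (j - 1)) (g j) (t (j - 1)) (t j) = r := by
          have h := hrate j (by omega) (by omega)
          rwa [rateAt, if_neg (by omega), if_neg (by omega)] at h
        have hp : 0 < t (j - 1) :=
          lt_of_lt_of_le t1pos (tmono (j - 1) (by omega) 1 (by omega))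
        have hpq : t (j - 1) < t j := by
          have := hinc (j - 1) (by omega)
          rwa [show j - 1 + 1 = j by omega] at this
        have hq : t j < 1 :=
          lt_of_le_of_lt (tmono (M - 2) (by omega) j hjM2) tM2lt1
        have hgj : 0 < g j := hg j (by omega) hjM2
        have hgjle : g j ≤ g (M - 2) := hmono j (M - 2) (by omega) hjM2 le_rfl
        have hbound := pairRate_le (g (j - 1)) (g j) (t (j - 1)) (t j)
          (hg (j - 1) (by omega) (by omega)) (hmono (j - 1) j (by omega) (by omega) hjM2)
          hp hpq.le hq
        rw [hrj] at hbound
        have hdpos : 0 < 1 - (t j - t (j - 1)) := by nlinarith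
        have hLK : Real.log (1 - (t j - t (j - 1))) ≤ Real.log (t (M - 2)) := by
          have hineq : g j * (-Real.log (t (M - 2))) ≤ g j * (-Real.log (1 - (t j - t (j - 1)))) := by
            nlinarith [mul_nonneg (sub_nonneg.mpr hgjle) (neg_nonneg.mpr hKneg)]
          nlinarith
        have := Real.exp_le_exp.mpr hLK
        rw [Real.exp_log hdpos, Real.exp_log tM2pos] at this
        linarith
  -- sum the gaps
  have hsum : ∑ i ∈ Finset.range (M - 1), (t (i + 1) - t i) = 1 := by
    rw [Finset.sum_range_sub, h0, h1, sub_zero]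
  have hge : (↑(M - 1) : ℝ) * (1 - t (M - 2)) ≤ 1 := by
    calc (↑(M - 1) : ℝ) * (1 - t (M - 2))
        = ∑ _i ∈ Finset.range (M - 1), (1 - t (M - 2)) := by
          rw [Finset.sum_const, Finset.card_range, nsmul_eq_mul]
      _ ≤ ∑ i ∈ Finset.range (M - 1), (t (i + 1) - t i) := by
          apply Finset.sum_le_sum
          intro i hi
          have hi' := Finset.mem_range.mp hi
          have := claim (i + 1) (by omega) (by omega)
          simpa using this
      _ = 1 := hsum
  have hcast : (↑(M - 1) : ℝ) = (M : ℝ) - 1 := by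
    rw [Nat.cast_sub (by omega), Nat.cast_one]
  rw [hcast] at hge
  have hM3 : (3:ℝ) ≤ (M : ℝ) := by exact_mod_cast hM
  have hMpos : (0:ℝ) < (M : ℝ) - 1 := by linarith
  have : 1 - t (M - 2) ≤ 1 / ((M : ℝ) - 1) := by
    rw [le_div_iff₀ hMpos]; nlinarith
  linarith
end

section
/- Let r^M denote the common rate value of the equalized solution with uniform weights and M levels. Then for every N ∈ ℕ with 2^N ≥ 3, r^{2^{N+1}−1} ≥ (1/5)·r^{2^N}. -/
open Real Finset

lemma key (M : ℕ) (hM : 3 ≤ M) (t : ℕ → ℝ) (r : ℝ)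
    (h : IsEqualizedWithRate M (fun _ => (1 : ℝ)) t r) :
    Real.exp (-(r / 2)) = Real.cos (π / (2 * ((M : ℝ) - 1))) := by
  obtain ⟨h0, h1, hmono, hrate⟩ := h
  -- chain monotonicity
  have hchain : ∀ j, j ≤ M - 1 → ∀ i, i < j → t i < t j := by
    intro j
    induction j with
    | zero => intro _ i hi; omega
    | succ n ih =>
      intro hj i hi
      have hn : t n < t (n + 1) := hmono n (by omega)
      rcases Nat.lt_succ_iff_lt_or_eq.mp hi with hlt | heq
      · exact (ih (by omega) i hlt).trans hn
      · rw [heq]; exact hn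
  have ht_nonneg : ∀ i, i ≤ M - 1 → 0 ≤ t i := by
    intro i hi
    rcases Nat.eq_zero_or_pos i with h' | h'
    · rw [h', h0]
    · have := hchain i hi 0 h'; rw [h0] at this; linarith
  have ht_le_one : ∀ i, i ≤ M - 1 → t i ≤ 1 := by
    intro i hi
    rcases eq_or_lt_of_le hi with h' | h'
    · rw [h', h1]
    · have := hchain (M - 1) le_rfl i h'; rw [h1] at this; linarith
  set θ : ℕ → ℝ := fun i => Real.arcsin (Real.sqrt (t i)) with hθ
  have hsqrt_le : ∀ i, i ≤ M - 1 → Real.sqrt (t i) ≤ 1 := by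
    intro i hi
    rw [show (1:ℝ) = Real.sqrt 1 by simp]
    exact Real.sqrt_le_sqrt (ht_le_one i hi)
  have hsin : ∀ i, i ≤ M - 1 → Real.sin (θ i) = Real.sqrt (t i) := fun i hi =>
    Real.sin_arcsin (by linarith [Real.sqrt_nonneg (t i)]) (hsqrt_le i hi)
  have hcos : ∀ i, i ≤ M - 1 → Real.cos (θ i) = Real.sqrt (1 - t i) := by
    intro i hi
    rw [hθ]
    rw [Real.cos_arcsin, Real.sq_sqrt (ht_nonneg i hi)]
  have hθ_nonneg : ∀ i, 0 ≤ θ i := fun i => Real.arcsin_nonneg.2 (Real.sqrt_nonneg _)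
  have hθ_le : ∀ i, θ i ≤ π / 2 := fun i => Real.arcsin_le_pi_div_two _
  have hθ0 : θ 0 = 0 := by rw [hθ]; simp [h0]
  have hθ1 : θ (M - 1) = π / 2 := by rw [hθ]; simp [h1]
  have hθmono : ∀ i, i < M - 1 → θ i < θ (i + 1) := by
    intro i hi
    have h2 : Real.sqrt (t i) < Real.sqrt (t (i + 1)) := by
      apply Real.sqrt_lt_sqrt (ht_nonneg i (by omega)) (hmono i hi)
    exact Real.strictMonoOn_arcsin ⟨by linarith [Real.sqrt_nonneg (t i)], hsqrt_le i (by omega)⟩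
      ⟨by linarith [Real.sqrt_nonneg (t (i+1))], hsqrt_le (i + 1) (by omega)⟩ h2
  -- each increment has cosine exp(-(r/2))
  have hkey : ∀ i, i < M - 1 → Real.cos (θ (i + 1) - θ i) = Real.exp (-(r / 2)) := by
    intro i hi
    rcases Nat.eq_zero_or_pos i with hi0 | hipos
    · -- i + 1 = 1
      subst hi0
      have hr := hrate 1 le_rfl (by omega)
      rw [rateAt, if_pos rfl] at hr
      simp only [neg_mul, one_mul] at hr
      have ht1 : 0 < 1 - t 1 := by
        have := hchain (M - 1) le_rfl 1 (by omega)
        rw [h1] at this; linarith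
      rw [hθ0, sub_zero, hcos 1 (by omega)]
      rw [← Real.exp_log (Real.sqrt_pos.2 ht1), Real.log_sqrt ht1.le]
      congr 1
      linarith
    rcases eq_or_lt_of_le (Nat.succ_le_of_lt hi) with hlast | hmid
    · -- i + 1 = M - 1
      have hr := hrate (M - 1) (by omega) le_rfl
      rw [rateAt, if_neg (by omega), if_pos rfl] at hr
      simp only [neg_mul, one_mul] at hr
      have hieq : i = M - 2 := by omega
      have hlast' : i + 1 = M - 1 := hlast
      have htpos : 0 < t (M - 2) := by
        have := hchain (M - 2) (by omega) 0 (by omega)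
        rw [h0] at this; linarith
      rw [hlast', hθ1, hieq]
      rw [Real.cos_pi_div_two_sub, hsin (M - 2) (by omega)]
      rw [← Real.exp_log (Real.sqrt_pos.2 htpos), Real.log_sqrt htpos.le]
      congr 1
      linarith
    · -- middle
      have hr := hrate (i + 1) (by omega) (by omega)
      rw [rateAt, if_neg (by omega), if_neg (by omega)] at hr
      simp only [Nat.add_sub_cancel] at hr
      rw [pairRate] at hr
      norm_num at hr
      rw [← Real.sqrt_eq_rpow, ← Real.sqrt_eq_rpow, ← Real.sqrt_eq_rpow,
        ← Real.sqrt_eq_rpow] at hr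
      have hBC : Real.sqrt (1 - t i) * Real.sqrt (1 - t (i + 1))
          + Real.sqrt (t i) * Real.sqrt (t (i + 1))
          = Real.cos (θ (i + 1) - θ i) := by
        rw [Real.cos_sub, hcos i (by omega), hcos (i + 1) (by omega),
          hsin i (by omega), hsin (i + 1) (by omega)]
        ring
      rw [hBC] at hr
      have hpos : 0 < Real.cos (θ (i + 1) - θ i) := by
        rw [← hBC]
        have h1' : 0 < Real.sqrt (t i) := Real.sqrt_pos.2 (by
          have := hchain i (by omega) 0 hipos; rw [h0] at this; linarith)
        have h2' : 0 < Real.sqrt (t (i + 1)) := Real.sqrt_pos.2 (by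
          have := hchain (i + 1) (by omega) 0 (by omega); rw [h0] at this; linarith)
        have h3' : 0 ≤ Real.sqrt (1 - t i) := Real.sqrt_nonneg _
        have h4' : 0 ≤ Real.sqrt (1 - t (i + 1)) := Real.sqrt_nonneg _
        nlinarith
      rw [← Real.exp_log hpos]
      congr 1
      linarith
  -- increments are all equal to arccos (exp (-(r/2)))
  have hdelta : ∀ i, i < M - 1 →
      θ (i + 1) - θ i = Real.arccos (Real.exp (-(r / 2))) := by
    intro i hi
    rw [← hkey i hi, Real.arccos_cos (by have := hθmono i hi; linarith)
      (by have := hθ_le (i + 1); have := hθ_nonneg i; linarith [Real.pi_gt_three])]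
  -- telescoping sum
  have hsum : ∑ i ∈ Finset.range (M - 1), (θ (i + 1) - θ i) = π / 2 := by
    rw [Finset.sum_range_sub, hθ1, hθ0, sub_zero]
  rw [Finset.sum_congr rfl (fun i hi => hdelta i (Finset.mem_range.1 hi))] at hsum
  rw [Finset.sum_const, Finset.card_range, nsmul_eq_mul] at hsum
  have hM1 : (0 : ℝ) < (M : ℝ) - 1 := by
    have : (3 : ℝ) ≤ (M : ℝ) := by exact_mod_cast hM
    linarith
  have hcast : ((M - 1 : ℕ) : ℝ) = (M : ℝ) - 1 := by
    have : (1 : ℕ) ≤ M := by omega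
    push_cast [this]; ring
  rw [hcast] at hsum
  have harc : Real.arccos (Real.exp (-(r / 2))) = π / (2 * ((M : ℝ) - 1)) := by
    field_simp at hsum ⊢
    linarith
  have hmem : Real.exp (-(r / 2)) = Real.cos (θ 1 - θ 0) := (hkey 0 (by omega)).symm
  rw [← harc, Real.cos_arccos (by rw [hmem]; exact Real.neg_one_le_cos _)
    (by rw [hmem]; exact Real.cos_le_one _)]

/-- **The optimal rate does not decay too fast under doubling.**
For uniform weights, `r^{2^{N+1}-1} ≥ (1/5)·r^{2^N}` whenever `2^N ≥ 3`. -/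
theorem equalized_rate_doubling_lower_bound
    (N : ℕ) (hN : 3 ≤ 2 ^ N) (t t' : ℕ → ℝ) (r r' : ℝ)
    (h : IsEqualizedWithRate (2 ^ N) (fun _ => (1 : ℝ)) t r)
    (h' : IsEqualizedWithRate (2 ^ (N + 1) - 1) (fun _ => (1 : ℝ)) t' r') :
    (1 / 5) * r ≤ r' := by
  have hN2 : 2 ≤ N := by
    by_contra hc
    push_neg at hc
    interval_cases N <;> norm_num at hN
  have h4 : 4 ≤ 2 ^ N := by
    calc 4 = 2 ^ 2 := by norm_num
    _ ≤ 2 ^ N := Nat.pow_le_pow_right (by norm_num) hN2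
  have e1 := key (2 ^ N) (by omega) t r h
  have e2 := key (2 ^ (N + 1) - 1) (by omega) t' r' h'
  set A : ℝ := (2 ^ N : ℕ) - 1 with hA
  have hA3 : (3 : ℝ) ≤ A := by
    rw [hA]
    have : ((4 : ℕ) : ℝ) ≤ ((2 ^ N : ℕ) : ℝ) := by exact_mod_cast h4
    push_cast at this ⊢
    linarith
  have hcastB : (((2 ^ (N + 1) - 1 : ℕ) : ℝ)) - 1 = 2 * A := by
    have h1 : 1 ≤ 2 ^ (N + 1) := Nat.one_le_two_pow
    rw [hA]
    push_cast [h1]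
    ring
  rw [hcastB] at e2
  set x : ℝ := π / (2 * (2 * A)) with hx
  have hAx : π / (2 * A) = 2 * x := by
    rw [hx]; field_simp
  rw [hAx] at e1
  set c : ℝ := Real.cos x with hc
  -- bounds on x
  have hπ : (0 : ℝ) < π := Real.pi_pos
  have hxpos : 0 < x := by
    rw [hx]; positivity
  have hxle : x ≤ 0.2625 := by
    rw [hx]
    have h315 : π < 3.15 := Real.pi_lt_d2
    have : π / (2 * (2 * A)) ≤ π / 12 := by
      apply div_le_div_of_nonneg_left hπ.le (by norm_num) (by linarith)
    have : π / 12 ≤ 3.15 / 12 := by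
      apply div_le_div_of_nonneg_right h315.le (by norm_num)
    linarith [div_le_div_of_nonneg_left hπ.le (show (0:ℝ) < 12 by norm_num) (show (12:ℝ) ≤ 2 * (2 * A) by linarith)]
  have hc96 : (0.96 : ℝ) ≤ c := by
    have hb := Real.one_sub_sq_div_two_le_cos (x := x)
    rw [← hc] at hb
    nlinarith
  have hc1 : c ≤ 1 := Real.cos_le_one x
  -- express r, r'
  have hr' : r' = -2 * Real.log c := by
    have := congrArg Real.log e2
    rw [Real.log_exp] at this
    linarith
  have hcos2 : Real.cos (2 * x) = 2 * c ^ 2 - 1 := by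
    rw [Real.cos_two_mul, hc]
  have hr : r = -2 * Real.log (2 * c ^ 2 - 1) := by
    have := congrArg Real.log e1
    rw [Real.log_exp, hcos2] at this
    linarith
  -- the polynomial inequality
  have hp2 : (0.9216 : ℝ) ≤ c ^ 2 := by nlinarith
  have hp3 : (0.884736 : ℝ) ≤ c ^ 3 := by nlinarith
  have hp4 : (0.84934656 : ℝ) ≤ c ^ 4 := by nlinarith
  have hgpos : (0 : ℝ) ≤ c ^ 4 + c ^ 3 + c ^ 2 - c - 1 := by linarith
  have hfac : (0 : ℝ) ≤ (1 - c) * (c ^ 4 + c ^ 3 + c ^ 2 - c - 1) :=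
    mul_nonneg (by linarith) hgpos
  have hpoly : c ^ 5 ≤ 2 * c ^ 2 - 1 := by nlinarith
  have hc5pos : (0 : ℝ) < c ^ 5 := by positivity
  have hlog : Real.log (c ^ 5) ≤ Real.log (2 * c ^ 2 - 1) :=
    Real.log_le_log hc5pos hpoly
  rw [Real.log_pow] at hlog
  push_cast at hlog
  rw [hr, hr']
  linarith
end

section
/- Let t^M = (t^M_0,…,t^M_{M−1}) denote the equalized solution with uniform weights and M levels. Then there exists a constant C > 0 such that for all M ≥ 3, t^M_1 ≥ C·M^{−3}. -/
lemma chain_lt (t : ℕ → ℝ) (N : ℕ) (h : ∀ i, i < N → t i < t (i + 1)) :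
    ∀ i j, i < j → j ≤ N → t i < t j := by
  intro i j hij hjN
  induction j with
  | zero => omega
  | succ k ih =>
    rcases Nat.lt_succ_iff_lt_or_eq.mp hij with h' | h'
    · exact (ih h' (by omega)).trans (h k (by omega))
    · subst h'; exact h i (by omega)

lemma chain_le (t : ℕ → ℝ) (N : ℕ) (h : ∀ i, i < N → t i < t (i + 1)) :
    ∀ i j, i ≤ j → j ≤ N → t i ≤ t j := by
  intro i j hij hjN
  rcases eq_or_lt_of_le hij with rfl | h'
  · exact le_rfl
  · exact (chain_lt t N h i j h' hjN).le

lemma exists_gap (t : ℕ → ℝ) (N : ℕ) (hN : 0 < N) (h0 : t 0 = 0) (h1 : t N = 1) :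
    ∃ i < N, 1 / (N : ℝ) ≤ t (i + 1) - t i := by
  by_contra hc
  push_neg at hc
  have hsum : ∑ i ∈ Finset.range N, (t (i + 1) - t i) = 1 := by
    rw [Finset.sum_range_sub, h0, h1]; ring
  have hlt : ∑ i ∈ Finset.range N, (t (i + 1) - t i)
      < ∑ _i ∈ Finset.range N, (1 / (N : ℝ)) := by
    apply Finset.sum_lt_sum_of_nonempty ⟨0, Finset.mem_range.mpr hN⟩
    intro i hi
    exact hc i (Finset.mem_range.mp hi)
  rw [hsum, Finset.sum_const, Finset.card_range, nsmul_eq_mul,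
    mul_one_div, div_self (by exact_mod_cast hN.ne')] at hlt
  exact absurd hlt (lt_irrefl 1)

lemma pairRate_ge (p q : ℝ) (hp : 0 < p) (hpq : p < q) (hq : q < 1) :
    (q - p) ^ 2 / 4 ≤ pairRate 1 1 p q := by
  have h1p : (0:ℝ) < 1 - p := by linarith
  have h1q : (0:ℝ) < 1 - q := by linarith
  have hq0 : (0:ℝ) < q := hp.trans hpq
  have hbc : pairRate 1 1 p q
      = -2 * Real.log (Real.sqrt (1 - p) * Real.sqrt (1 - q) + Real.sqrt p * Real.sqrt q) := by
    simp only [pairRate]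
    rw [Real.sqrt_eq_rpow, Real.sqrt_eq_rpow, Real.sqrt_eq_rpow, Real.sqrt_eq_rpow]
    norm_num
  set a := Real.sqrt p with ha'
  set b := Real.sqrt q with hb'
  set c := Real.sqrt (1 - p) with hc'
  set d := Real.sqrt (1 - q) with hd'
  have ha : a ^ 2 = p := Real.sq_sqrt hp.le
  have hb : b ^ 2 = q := Real.sq_sqrt hq0.le
  have hcc : c ^ 2 = 1 - p := Real.sq_sqrt h1p.le
  have hdd : d ^ 2 = 1 - q := Real.sq_sqrt h1q.le
  have ha0 : 0 < a := Real.sqrt_pos.mpr hp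
  have hb0 : 0 < b := Real.sqrt_pos.mpr hq0
  have hc0 : 0 < c := Real.sqrt_pos.mpr h1p
  have hd0 : 0 < d := Real.sqrt_pos.mpr h1q
  have hs_pos : 0 < c * d + a * b := by positivity
  have h4 : (a + b) ^ 2 ≤ 4 := by nlinarith [sq_nonneg (a - b)]
  have hk : (b - a) ^ 2 ≤ 2 - 2 * (c * d + a * b) := by nlinarith [sq_nonneg (c - d)]
  have hqp : (q - p) ^ 2 ≤ 4 * (b - a) ^ 2 := by
    have hid : (q - p) ^ 2 = (b - a) ^ 2 * (a + b) ^ 2 := by rw [← ha, ← hb]; ring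
    nlinarith [mul_nonneg (sq_nonneg (b - a)) (by linarith : (0:ℝ) ≤ 4 - (a + b) ^ 2)]
  have hlog : Real.log (c * d + a * b) ≤ (c * d + a * b) - 1 :=
    Real.log_le_sub_one_of_pos hs_pos
  rw [hbc]
  nlinarith [hlog, hk, hqp]

/-- **Polynomial lower bound on the first level (uniform weights).**
There is a constant `C > 0` such that for all `M ≥ 3`, the equalized solution with uniform
weights and `M` levels satisfies `t^M_1 ≥ C·M⁻³`. -/
theorem equalized_first_level_lower_bound :
    ∃ C : ℝ, 0 < C ∧ ∀ M : ℕ, 3 ≤ M →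
      ∀ t : ℕ → ℝ, IsEqualizedSol M (fun _ => (1 : ℝ)) t →
        C / (M : ℝ) ^ 3 ≤ t 1 := by
  refine ⟨1/5, by norm_num, ?_⟩
  intro M hM t ht
  obtain ⟨r, h0, h1, hlt, hrate⟩ := ht
  set u : ℝ := (M : ℝ) with hu'
  have hu3 : (3:ℝ) ≤ u := by rw [hu']; exact_mod_cast hM
  have hupos : (0:ℝ) < u := by linarith
  have hN : ((M - 1 : ℕ) : ℝ) = u - 1 := by
    rw [hu']; push_cast [Nat.cast_sub (by omega : 1 ≤ M)]; ring
  have hNu : (1:ℝ) / (u - 1) ≥ 1 / u := by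
    apply one_div_le_one_div_of_le <;> linarith
  have ht1pos : 0 < t 1 := by
    have := chain_lt t (M - 1) hlt 0 1 one_pos (by omega)
    linarith [this, h0.ge, h0.le]
  have ht1lt1 : t 1 < 1 := by
    have := chain_lt t (M - 1) hlt 1 (M - 1) (by omega) le_rfl
    linarith [this, h1.le]
  have hr1 : -Real.log (1 - t 1) = r := by
    have := hrate 1 le_rfl (by omega)
    simpa [rateAt] using this
  obtain ⟨i, hiN, hgap⟩ := exists_gap t (M - 1) (by omega) h0 h1
  rw [hN] at hgap
  -- final step from a lower bound on r
  have final : 1 / (4 * u ^ 2) ≤ r → 1 / 5 / u ^ 3 ≤ t 1 := by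
    intro hr
    have h1t : 0 < 1 - t 1 := by linarith
    have hle : 1 - t 1 ≤ Real.exp (-(1 / (4 * u ^ 2))) := by
      calc 1 - t 1 = Real.exp (Real.log (1 - t 1)) := (Real.exp_log h1t).symm
        _ ≤ Real.exp (-(1 / (4 * u ^ 2))) := by
            apply Real.exp_le_exp.mpr; linarith [hr1, hr]
    have hs : (0:ℝ) < 1 / (4 * u ^ 2) := by positivity
    have hexp : Real.exp (-(1 / (4 * u ^ 2))) ≤ 1 / (1 + 1 / (4 * u ^ 2)) := by
      rw [Real.exp_neg, ← one_div]
      apply one_div_le_one_div_of_le (by linarith)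
      linarith [Real.add_one_le_exp (1 / (4 * u ^ 2))]
    have he : 1 - 1 / (1 + 1 / (4 * u ^ 2)) = 1 / (4 * u ^ 2 + 1) := by
      field_simp
      ring
    have hgoal : 1 / 5 / u ^ 3 ≤ 1 / (4 * u ^ 2 + 1) := by
      rw [div_le_div_iff₀ (by positivity) (by positivity)]
      nlinarith [sq_nonneg u]
    linarith [hle, hexp, he.ge, he.le, hgoal]
  rcases Nat.eq_zero_or_pos i with rfl | hipos
  · -- first interval is long
    rw [h0] at hgap
    have : 1 / u ≤ t 1 := by linarith [hNu, hgap]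
    have : 1 / 5 / u ^ 3 ≤ 1 / u := by
      rw [div_le_div_iff₀ (by positivity) hupos]
      nlinarith [sq_nonneg u]
    linarith
  · apply final
    rcases eq_or_lt_of_le (by omega : i + 1 ≤ M - 1) with hlast | hmid
    · -- last interval is long
      have hi2 : i = M - 2 := by omega
      have hr2 : -Real.log (t (M - 2)) = r := by
        have := hrate (M - 1) (by omega) le_rfl
        have hne : M - 1 ≠ 1 := by omega
        simpa [rateAt, hne] using this
      have htpos : 0 < t (M - 2) := by
        have := chain_le t (M - 1) hlt 1 (M - 2) (by omega) (by omega)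
        linarith
      have hub : t (M - 2) ≤ 1 - 1 / u := by
        have : t (i + 1) = 1 := by rw [show i + 1 = M - 1 from hlast, h1]
        rw [← hi2]; linarith [hgap, hNu]
      have hlog := Real.log_le_sub_one_of_pos htpos
      have : 1 / u ≤ r := by linarith [hr2]
      have : 1 / (4 * u ^ 2) ≤ 1 / u := by
        rw [div_le_div_iff₀ (by positivity) hupos]
        nlinarith
      linarith
    · -- middle interval is long
      have hj1 : i + 1 ≠ 1 := by omega
      have hjM : i + 1 ≠ M - 1 := by omega
      have hrmid : pairRate 1 1 (t i) (t (i + 1)) = r := by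
        have := hrate (i + 1) (by omega) (by omega)
        simpa [rateAt, hj1, hjM, hipos.ne'] using this
      have hppos : 0 < t i := by
        have := chain_le t (M - 1) hlt 1 i (by omega) (by omega)
        linarith
      have hqlt1 : t (i + 1) < 1 := by
        have := chain_lt t (M - 1) hlt (i + 1) (M - 1) hmid le_rfl
        linarith [h1.le]
      have hplq : t i < t (i + 1) := hlt i hiN
      have hpr := pairRate_ge (t i) (t (i + 1)) hppos hplq hqlt1
      rw [hrmid] at hpr
      have hsq : (1 / (u - 1)) ^ 2 ≤ (t (i + 1) - t i) ^ 2 :=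
        pow_le_pow_left₀ (le_of_lt (one_div_pos.mpr (by linarith))) hgap 2
      have : 1 / (4 * u ^ 2) ≤ (1 / (u - 1)) ^ 2 / 4 := by
        rw [div_pow, one_pow, div_div, div_le_div_iff₀ (by positivity) (by nlinarith)]
        nlinarith
      linarith
end

section
/- There exists a constant C > 0 such that for all M ≥ 3 and all positive nondecreasing weights g₁ ≤ g₂ ≤ ⋯ ≤ g_{M−2}, the equalized solution t* = (t*₀,…,t*_{M−1}) for these weights satisfies t*₁ ≥ C·M^{−3}; in particular, t*₁ is at least the first level of the equalized solution with uniform weights and the same number M of levels. -/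
open Real

lemma sqrt_exp' (x : ℝ) : Real.sqrt (Real.exp x) = Real.exp (x/2) := by
  rw [show Real.exp x = Real.exp (x/2) ^ 2 by rw [sq, ← Real.exp_add]; ring_nf,
    Real.sqrt_sq (Real.exp_pos _).le]

lemma cos_gap {p q : ℝ} (hp0 : 0 ≤ p) (hp1 : p ≤ 1) (hq0 : 0 ≤ q) (hq1 : q ≤ 1) :
    Real.cos (Real.arcsin (Real.sqrt q) - Real.arcsin (Real.sqrt p))
      = Real.sqrt ((1-p)*(1-q)) + Real.sqrt (p*q) := by
  have h1 : -1 ≤ Real.sqrt p := by have := Real.sqrt_nonneg p; linarith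
  have h2 : -1 ≤ Real.sqrt q := by have := Real.sqrt_nonneg q; linarith
  rw [Real.cos_sub, Real.cos_arcsin, Real.cos_arcsin,
    Real.sin_arcsin h2 (Real.sqrt_le_one.2 hq1), Real.sin_arcsin h1 (Real.sqrt_le_one.2 hp1),
    Real.sq_sqrt hq0, Real.sq_sqrt hp0, ← Real.sqrt_mul (by linarith), ← Real.sqrt_mul hq0,
    mul_comm (1-q) (1-p), mul_comm q p]

lemma hoelder_pair {a x y u v : ℝ} (hx : 0 < x) (hy : 0 < y) (hu : 0 < u) (hv : 0 < v)
    (hyv : y + v = 1) (ha : 0 < a) (ha2 : 2*a ≤ 1) :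
    x ^ a * y ^ (1-a) + u ^ a * v ^ (1-a)
      ≤ (Real.sqrt (x*y) + Real.sqrt (u*v)) ^ (2*a) := by
  set B := Real.sqrt (x*y) + Real.sqrt (u*v) with hBdef
  have hBpos : 0 < B := by
    have : 0 < Real.sqrt (x*y) := Real.sqrt_pos.2 (by positivity)
    have : 0 ≤ Real.sqrt (u*v) := Real.sqrt_nonneg _
    simp only [hBdef]; linarith
  have hBne : (0:ℝ) < B ^ (2*a) := Real.rpow_pos_of_pos hBpos _
  have term : ∀ s t : ℝ, 0 < s → 0 < t →
      s ^ a * t ^ (1-a) = B ^ (2*a) * ((Real.sqrt (s*t)/B) ^ (2*a) * t ^ (1-2*a)) := by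
    intro s t hs ht
    have e2 : Real.sqrt (s*t) ^ (2*a) = s ^ a * t ^ a := by
      rw [Real.sqrt_eq_rpow, ← Real.rpow_mul (by positivity),
        show 1/(2:ℝ) * (2*a) = a by ring, Real.mul_rpow hs.le ht.le]
    rw [Real.div_rpow (Real.sqrt_nonneg _) hBpos.le, e2]
    rw [div_mul_eq_mul_div, mul_div_assoc', mul_comm (B ^ (2*a)), mul_div_assoc,
      div_self hBne.ne', mul_one, mul_assoc, ← Real.rpow_add ht,
      show a + (1-2*a) = 1-a by ring]
  rw [term x y hx hy, term u v hu hv]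
  have am1 := Real.geom_mean_le_arith_mean2_weighted (by linarith : (0:ℝ) ≤ 2*a)
    (by linarith : (0:ℝ) ≤ 1-2*a) (by positivity : (0:ℝ) ≤ Real.sqrt (x*y)/B) hy.le
    (by ring)
  have am2 := Real.geom_mean_le_arith_mean2_weighted (by linarith : (0:ℝ) ≤ 2*a)
    (by linarith : (0:ℝ) ≤ 1-2*a) (by positivity : (0:ℝ) ≤ Real.sqrt (u*v)/B) hv.le
    (by ring)
  have hsum : (2*a) * (Real.sqrt (x*y)/B) + (1-2*a) * y
      + ((2*a) * (Real.sqrt (u*v)/B) + (1-2*a) * v) = 1 := by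
    have : Real.sqrt (x*y)/B + Real.sqrt (u*v)/B = 1 := by
      rw [← add_div, ← hBdef, div_self hBpos.ne']
    nlinarith [this]
  nlinarith [am1, am2, hBne.le, mul_le_mul_of_nonneg_left (add_le_add am1 am2) hBne.le]

lemma sqrt_amgm {x y : ℝ} (hx : 0 ≤ x) (hy : 0 ≤ y) : Real.sqrt (x*y) ≤ (x+y)/2 := by
  have h : x*y ≤ ((x+y)/2)^2 := by nlinarith [sq_nonneg (x-y)]
  calc Real.sqrt (x*y) ≤ Real.sqrt (((x+y)/2)^2) := Real.sqrt_le_sqrt h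
    _ = (x+y)/2 := Real.sqrt_sq (by linarith)

lemma pairRate_lower {g h p q gm : ℝ} (hgm : 0 < gm) (hg : gm ≤ g) (hh : gm ≤ h)
    (hp0 : 0 < p) (hp1 : p < 1) (hq0 : 0 < q) (hq1 : q < 1) :
    -(2*gm) * Real.log (Real.sqrt ((1-p)*(1-q)) + Real.sqrt (p*q)) ≤ pairRate g h p q := by
  set B := Real.sqrt ((1-p)*(1-q)) + Real.sqrt (p*q) with hBdef
  have hBpos : 0 < B := by
    have h1 : 0 < Real.sqrt (p*q) := Real.sqrt_pos.2 (by positivity)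
    have h2 : 0 ≤ Real.sqrt ((1-p)*(1-q)) := Real.sqrt_nonneg _
    simp only [hBdef]; linarith
  have hB1 : B ≤ 1 := by
    have h1 := sqrt_amgm (by linarith : (0:ℝ) ≤ 1-p) (by linarith : (0:ℝ) ≤ 1-q)
    have h2 := sqrt_amgm hp0.le hq0.le
    simp only [hBdef]; linarith
  have hlogB : Real.log B ≤ 0 := Real.log_nonpos hBpos.le hB1
  have hgh : 0 < g + h := by linarith
  set A := (1 - p) ^ (g / (g+h)) * (1 - q) ^ (h / (g+h))
      + p ^ (g / (g+h)) * q ^ (h / (g+h)) with hAdef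
  have hApos : 0 < A := by
    have h1 : 0 < (1 - p) ^ (g / (g+h)) := Real.rpow_pos_of_pos (by linarith) _
    have h2 : 0 < (1 - q) ^ (h / (g+h)) := Real.rpow_pos_of_pos (by linarith) _
    have h3 : 0 < p ^ (g / (g+h)) := Real.rpow_pos_of_pos hp0 _
    have h4 : 0 < q ^ (h / (g+h)) := Real.rpow_pos_of_pos hq0 _
    simp only [hAdef]; nlinarith
  have main : ∀ a : ℝ, 0 < a → gm ≤ a*(g+h) → A ≤ B ^ (2*a) →
      -(2*gm) * Real.log B ≤ pairRate g h p q := by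
    intro a ha hagm hAB
    have hlog : Real.log A ≤ (2*a) * Real.log B := by
      calc Real.log A ≤ Real.log (B ^ (2*a)) := Real.log_le_log hApos hAB
        _ = (2*a) * Real.log B := Real.log_rpow hBpos _
    have : pairRate g h p q = -(g+h) * Real.log A := by rw [pairRate, hAdef]
    rw [this]
    nlinarith [mul_le_mul_of_nonneg_left hlog (le_of_lt hgh)]
  rcases le_total g h with hcase | hcase
  · set a := g/(g+h) with hadef
    have ha : 0 < a := div_pos (by linarith) hgh
    have ha2 : 2*a ≤ 1 := by
      rw [hadef, mul_div_assoc', div_le_one hgh]; linarith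
    have he : h/(g+h) = 1 - a := by rw [hadef]; field_simp; ring
    refine main a ha (by rw [hadef, div_mul_cancel₀ _ hgh.ne']; exact hg) ?_
    have H := hoelder_pair (a := a) (by linarith : (0:ℝ) < 1-p) (by linarith : (0:ℝ) < 1-q)
      hp0 hq0 (by ring) ha ha2
    rw [hAdef, hBdef, he]
    exact H
  · set a := h/(g+h) with hadef
    have ha : 0 < a := div_pos (by linarith) hgh
    have ha2 : 2*a ≤ 1 := by
      rw [hadef, mul_div_assoc', div_le_one hgh]; linarith
    have he : g/(g+h) = 1 - a := by rw [hadef]; field_simp; ring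
    refine main a ha (by rw [hadef, div_mul_cancel₀ _ hgh.ne']; exact hh) ?_
    have H := hoelder_pair (a := a) (by linarith : (0:ℝ) < 1-q) (by linarith : (0:ℝ) < 1-p)
      hq0 hp0 (by ring) ha ha2
    rw [hAdef, hBdef, he, mul_comm ((1-p) ^ (1-a)) ((1-q) ^ a),
      mul_comm (p ^ (1-a)) (q ^ a), mul_comm (1-p) (1-q), mul_comm p q]
    exact H

lemma t_strict {M : ℕ} {t : ℕ → ℝ} (hlt : ∀ i, i < M - 1 → t i < t (i+1)) :
    ∀ i j, i < j → j ≤ M - 1 → t i < t j := by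
  intro i j hij hj
  induction j with
  | zero => omega
  | succ n ih =>
    rcases Nat.lt_or_ge i n with h'|h'
    · exact (ih h' (by omega)).trans (hlt n (by omega))
    · have hin : i = n := by omega
      subst hin; exact hlt i (by omega)

section Core

variable {M : ℕ} {g t : ℕ → ℝ} {r : ℝ}

/-- All the facts we need about the angles of an equalized solution with
positive nondecreasing weights. -/
lemma mono_first_angle (hM : 3 ≤ M)
    (hgpos : ∀ i, 1 ≤ i → i ≤ M - 2 → 0 < g i)
    (hgmono : ∀ i j, 1 ≤ i → i ≤ j → j ≤ M - 2 → g i ≤ g j)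
    (heq : IsEqualizedWithRate M g t r) :
    (∀ j, j < M - 1 →
        Real.exp (-(r/(2 * g 1))) ≤ Real.cos (Real.arcsin (Real.sqrt (t (j+1)))
          - Real.arcsin (Real.sqrt (t j)))) ∧
    Real.cos (Real.arcsin (Real.sqrt (t 1))) = Real.exp (-(r/(2 * g 1))) := by
  obtain ⟨h0, h1, hlt, hr⟩ := heq
  have hst := t_strict hlt
  have hb : ∀ i, i ≤ M-1 → 0 ≤ t i ∧ t i ≤ 1 := by
    intro i hi
    constructor
    · rcases Nat.eq_zero_or_pos i with h|h
      · subst h; rw [h0]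
      · exact le_of_lt (h0 ▸ hst 0 i h hi)
    · rcases Nat.lt_or_ge i (M-1) with h|h
      · exact le_of_lt (h1 ▸ hst i (M-1) h le_rfl)
      · have : i = M-1 := by omega
        rw [this, h1]
  have hg1 : 0 < g 1 := hgpos 1 le_rfl (by omega)
  have ht1a : 0 < t 1 := h0 ▸ hst 0 1 (by omega) (by omega)
  have ht1b : t 1 < 1 := h1 ▸ hst 1 (M-1) (by omega) le_rfl
  have hr1 : -(g 1) * Real.log (1 - t 1) = r := by
    have := hr 1 le_rfl (by omega)
    rwa [rateAt, if_pos rfl] at this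
  have hrpos : 0 < r := by
    nlinarith [Real.log_neg (by linarith : (0:ℝ) < 1 - t 1) (by linarith : 1 - t 1 < 1)]
  have hcos1 : Real.cos (Real.arcsin (Real.sqrt (t 1))) = Real.exp (-(r/(2 * g 1))) := by
    have hlg : Real.log (1 - t 1) = -(r / g 1) := by
      field_simp
      nlinarith [hr1]
    have h1t : 1 - t 1 = Real.exp (-(r/g 1)) := by
      rw [← hlg, Real.exp_log (by linarith)]
    rw [Real.cos_arcsin, Real.sq_sqrt ht1a.le, h1t, sqrt_exp']
    congr 1; ring
  refine ⟨?_, hcos1⟩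
  intro j hj
  by_cases hj0 : j = 0
  · subst hj0
    rw [show t 0 = 0 from h0, Real.sqrt_zero, Real.arcsin_zero, sub_zero, hcos1]
  by_cases hjtop : j = M-2
  · subst hjtop
    have he1 : M - 2 + 1 = M - 1 := by omega
    rw [he1, h1, Real.sqrt_one, Real.arcsin_one, Real.cos_pi_div_two_sub]
    have hrM := hr (M-1) (by omega) le_rfl
    rw [rateAt, if_neg (by omega), if_pos rfl] at hrM
    have hgM : 0 < g (M-2) := hgpos (M-2) (by omega) le_rfl
    have hgM1 : g 1 ≤ g (M-2) := hgmono 1 (M-2) le_rfl (by omega) le_rfl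
    have htM : 0 < t (M-2) := h0 ▸ hst 0 (M-2) (by omega) (by omega)
    have htM1 : t (M-2) ≤ 1 := (hb (M-2) (by omega)).2
    have hlg : Real.log (t (M-2)) = -(r / g (M-2)) := by
      field_simp
      nlinarith [hrM]
    have htMe : t (M-2) = Real.exp (-(r / g (M-2))) := by
      rw [← hlg, Real.exp_log htM]
    rw [Real.sin_arcsin (by nlinarith [Real.sqrt_nonneg (t (M-2))]) (Real.sqrt_le_one.2 htM1),
      htMe, sqrt_exp']
    rw [show -(r / g (M-2))/2 = -(r/(2 * g (M-2))) by ring]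
    apply Real.exp_le_exp.2
    have : r/(2 * g (M-2)) ≤ r/(2 * g 1) := by
      apply div_le_div_of_nonneg_left hrpos.le (by linarith) (by linarith)
    linarith
  · -- interior gap
    have hj1 : 1 ≤ j := by omega
    have hj2 : j + 1 ≤ M - 2 := by omega
    have hi := hr (j+1) (by omega) (by omega)
    rw [rateAt, if_neg (by omega), if_neg (by omega), Nat.add_sub_cancel] at hi
    have htj0 : 0 < t j := h0 ▸ hst 0 j (by omega) (by omega)
    have htj1 : t j < 1 := h1 ▸ hst j (M-1) (by omega) le_rfl
    have htk0 : 0 < t (j+1) := h0 ▸ hst 0 (j+1) (by omega) (by omega)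
    have htk1 : t (j+1) < 1 := h1 ▸ hst (j+1) (M-1) (by omega) le_rfl
    have hPL := pairRate_lower hg1 (hgmono 1 j le_rfl hj1 (by omega))
      (hgmono 1 (j+1) le_rfl (by omega) hj2) htj0 htj1 htk0 htk1
    rw [hi] at hPL
    set B := Real.sqrt ((1 - t j)*(1 - t (j+1))) + Real.sqrt (t j * t (j+1)) with hBdef
    have hBpos : 0 < B := by
      have hs1 : 0 < Real.sqrt (t j * t (j+1)) := Real.sqrt_pos.2 (by positivity)
      have hs2 : 0 ≤ Real.sqrt ((1 - t j)*(1 - t (j+1))) := Real.sqrt_nonneg _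
      simp only [hBdef]; linarith
    have hlogB : -(r/(2 * g 1)) ≤ Real.log B := by
      rw [show -(r/(2 * g 1)) = -r/(2 * g 1) by ring]
      exact (div_le_iff₀ (by linarith : (0:ℝ) < 2 * g 1)).2 (by nlinarith [hPL])
    calc Real.exp (-(r/(2 * g 1))) ≤ Real.exp (Real.log B) := Real.exp_le_exp.2 hlogB
      _ = B := Real.exp_log hBpos
      _ = Real.cos (Real.arcsin (Real.sqrt (t (j+1))) - Real.arcsin (Real.sqrt (t j))) := by
          rw [cos_gap htj0.le htj1.le htk0.le htk1.le]

end Core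

section Agg

variable {M : ℕ} {g t : ℕ → ℝ} {r : ℝ}

lemma theta_facts (hM : 3 ≤ M)
    (hgpos : ∀ i, 1 ≤ i → i ≤ M - 2 → 0 < g i)
    (hgmono : ∀ i j, 1 ≤ i → i ≤ j → j ≤ M - 2 → g i ≤ g j)
    (heq : IsEqualizedWithRate M g t r) :
    Real.pi / (2*((M:ℝ)-1)) ≤ Real.arcsin (Real.sqrt (t 1)) ∧
    Real.arcsin (Real.sqrt (t 1)) ≤ Real.pi / 2 ∧
    t 1 = Real.sin (Real.arcsin (Real.sqrt (t 1))) ^ 2 := by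
  obtain ⟨hgap, hcos1⟩ := mono_first_angle hM hgpos hgmono heq
  obtain ⟨h0, h1, hlt, hr⟩ := heq
  have hst := t_strict hlt
  set θ : ℕ → ℝ := fun i => Real.arcsin (Real.sqrt (t i)) with hθ
  have hθnn : ∀ i, 0 ≤ θ i := fun i => Real.arcsin_nonneg.2 (Real.sqrt_nonneg _)
  have hθle : ∀ i, θ i ≤ Real.pi/2 := fun i => Real.arcsin_le_pi_div_two _
  have hθmono : ∀ i j, i ≤ j → j ≤ M-1 → θ i ≤ θ j := by
    intro i j hij hj
    rcases eq_or_lt_of_le hij with h|h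
    · rw [h]
    · exact Real.monotone_arcsin (Real.sqrt_le_sqrt (hst i j h hj).le)
  have hpi := Real.pi_pos
  have hgaple : ∀ j, j < M-1 → θ (j+1) - θ j ≤ θ 1 := by
    intro j hj
    by_contra hcon
    push_neg at hcon
    have hmem1 : θ 1 ∈ Set.Icc 0 Real.pi := ⟨hθnn 1, by linarith [hθle 1]⟩
    have hmem2 : θ (j+1) - θ j ∈ Set.Icc 0 Real.pi := by
      constructor
      · have := hθmono j (j+1) (by omega) (by omega)
        linarith
      · linarith [hθle (j+1), hθnn j]
    have := Real.strictAntiOn_cos hmem1 hmem2 hcon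
    rw [hcos1] at this
    linarith [hgap j hj]
  have hθ0 : θ 0 = 0 := by simp [hθ, h0]
  have hθtop : θ (M-1) = Real.pi/2 := by simp [hθ, h1]
  have ht1a : 0 < t 1 := h0 ▸ hst 0 1 (by omega) (by omega)
  have ht1b : t 1 < 1 := h1 ▸ hst 1 (M-1) (by omega) le_rfl
  have e1 : ∑ j ∈ Finset.range (M-1), (θ (j+1) - θ j) = θ (M-1) - θ 0 :=
    Finset.sum_range_sub θ (M-1)
  have e2 : ∑ j ∈ Finset.range (M-1), (θ (j+1) - θ j)
      ≤ ∑ _j ∈ Finset.range (M-1), θ 1 :=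
    Finset.sum_le_sum (fun j hj => hgaple j (Finset.mem_range.1 hj))
  rw [Finset.sum_const, Finset.card_range, nsmul_eq_mul] at e2
  have e3 : ((M-1:ℕ):ℝ) = (M:ℝ)-1 := by
    rw [Nat.cast_sub (by omega)]; norm_num
  rw [e1, hθ0, hθtop, sub_zero, e3] at e2
  have hM3 : (3:ℝ) ≤ (M:ℝ) := by exact_mod_cast hM
  refine ⟨?_, hθle 1, ?_⟩
  · rw [div_le_iff₀ (by linarith)]
    nlinarith [hθnn 1]
  · rw [Real.sin_arcsin (by linarith [Real.sqrt_nonneg (t 1)]) (Real.sqrt_le_one.2 ht1b.le),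
      Real.sq_sqrt ht1a.le]

lemma pairRate_one_one {p q : ℝ} (hp0 : 0 ≤ p) (hq0 : 0 ≤ q) (hp1 : p ≤ 1) :
    pairRate 1 1 p q = -2 * Real.log (Real.sqrt ((1-p)*(1-q)) + Real.sqrt (p*q)) := by
  rw [pairRate, show (1:ℝ)/(1+1) = 1/2 by norm_num]
  simp only [← Real.sqrt_eq_rpow]
  rw [← Real.sqrt_mul (by linarith : (0:ℝ) ≤ 1-p), ← Real.sqrt_mul hp0]
  norm_num

lemma uniform_gap_cos {u : ℕ → ℝ} (hM : 3 ≤ M)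
    (heq : IsEqualizedWithRate M (fun _ => 1) u r) :
    ∀ j, j < M - 1 → Real.cos (Real.arcsin (Real.sqrt (u (j+1)))
        - Real.arcsin (Real.sqrt (u j))) = Real.exp (-(r/2)) := by
  obtain ⟨h0, h1, hlt, hr⟩ := heq
  have hst := t_strict hlt
  have hb : ∀ i, i ≤ M-1 → 0 ≤ u i ∧ u i ≤ 1 := by
    intro i hi
    constructor
    · rcases Nat.eq_zero_or_pos i with h|h
      · subst h; rw [h0]
      · exact le_of_lt (h0 ▸ hst 0 i h hi)
    · rcases Nat.lt_or_ge i (M-1) with h|h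
      · exact le_of_lt (h1 ▸ hst i (M-1) h le_rfl)
      · have : i = M-1 := by omega
        rw [this, h1]
  intro j hj
  by_cases hj0 : j = 0
  · subst hj0
    have ht1a : 0 < u 1 := h0 ▸ hst 0 1 (by omega) (by omega)
    have ht1b : u 1 < 1 := h1 ▸ hst 1 (M-1) (by omega) le_rfl
    have hr1 : -Real.log (1 - u 1) = r := by
      have := hr 1 le_rfl (by omega)
      rw [rateAt, if_pos rfl] at this
      simpa using this
    rw [show u 0 = 0 from h0, Real.sqrt_zero, Real.arcsin_zero, sub_zero,
      Real.cos_arcsin, Real.sq_sqrt ht1a.le]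
    have h1t : 1 - u 1 = Real.exp (-r) := by
      rw [show -r = Real.log (1 - u 1) by linarith, Real.exp_log (by linarith)]
    rw [h1t, sqrt_exp']
    congr 1; ring
  by_cases hjtop : j = M-2
  · subst hjtop
    have he1 : M - 2 + 1 = M - 1 := by omega
    have htM : 0 < u (M-2) := h0 ▸ hst 0 (M-2) (by omega) (by omega)
    have htM1 : u (M-2) ≤ 1 := (hb (M-2) (by omega)).2
    have hrM : -Real.log (u (M-2)) = r := by
      have := hr (M-1) (by omega) le_rfl
      rw [rateAt, if_neg (by omega), if_pos rfl] at this
      simpa using this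
    rw [he1, h1, Real.sqrt_one, Real.arcsin_one, Real.cos_pi_div_two_sub,
      Real.sin_arcsin (by linarith [Real.sqrt_nonneg (u (M-2))]) (Real.sqrt_le_one.2 htM1)]
    have htMe : u (M-2) = Real.exp (-r) := by
      rw [show -r = Real.log (u (M-2)) by linarith, Real.exp_log htM]
    rw [htMe, sqrt_exp']
    congr 1; ring
  · have hj1 : 1 ≤ j := by omega
    have hj2 : j + 1 ≤ M - 2 := by omega
    have hi := hr (j+1) (by omega) (by omega)
    rw [rateAt, if_neg (by omega), if_neg (by omega), Nat.add_sub_cancel] at hi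
    have htj0 : 0 < u j := h0 ▸ hst 0 j (by omega) (by omega)
    have htj1 : u j < 1 := h1 ▸ hst j (M-1) (by omega) le_rfl
    have htk0 : 0 < u (j+1) := h0 ▸ hst 0 (j+1) (by omega) (by omega)
    have htk1 : u (j+1) < 1 := h1 ▸ hst (j+1) (M-1) (by omega) le_rfl
    rw [pairRate_one_one htj0.le htk0.le htj1.le] at hi
    set B := Real.sqrt ((1 - u j)*(1 - u (j+1))) + Real.sqrt (u j * u (j+1)) with hBdef
    have hBpos : 0 < B := by
      have hs1 : 0 < Real.sqrt (u j * u (j+1)) := Real.sqrt_pos.2 (by positivity)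
      have hs2 : 0 ≤ Real.sqrt ((1 - u j)*(1 - u (j+1))) := Real.sqrt_nonneg _
      simp only [hBdef]; linarith
    have hlogB : Real.log B = -(r/2) := by linarith
    rw [cos_gap htj0.le htj1.le htk0.le htk1.le, ← hlogB, Real.exp_log hBpos]

lemma uniform_first {u : ℕ → ℝ} (hM : 3 ≤ M)
    (heq : IsEqualizedWithRate M (fun _ => 1) u r) :
    u 1 = Real.sin (Real.pi / (2*((M:ℝ)-1))) ^ 2 := by
  have hgap := uniform_gap_cos hM heq
  obtain ⟨h0, h1, hlt, hr⟩ := heq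
  have hst := t_strict hlt
  set θ : ℕ → ℝ := fun i => Real.arcsin (Real.sqrt (u i)) with hθ
  have hθnn : ∀ i, 0 ≤ θ i := fun i => Real.arcsin_nonneg.2 (Real.sqrt_nonneg _)
  have hθle : ∀ i, θ i ≤ Real.pi/2 := fun i => Real.arcsin_le_pi_div_two _
  have hθmono : ∀ i j, i ≤ j → j ≤ M-1 → θ i ≤ θ j := by
    intro i j hij hj
    rcases eq_or_lt_of_le hij with h|h
    · rw [h]
    · exact Real.monotone_arcsin (Real.sqrt_le_sqrt (hst i j h hj).le)
  have hpi := Real.pi_pos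
  have hθ0 : θ 0 = 0 := by simp [hθ, h0]
  have hθtop : θ (M-1) = Real.pi/2 := by simp [hθ, h1]
  have hgapeq : ∀ j, j < M-1 → θ (j+1) - θ j = θ 1 := by
    intro j hj
    have hmem1 : θ 1 ∈ Set.Icc 0 Real.pi := ⟨hθnn 1, by linarith [hθle 1]⟩
    have hmem2 : θ (j+1) - θ j ∈ Set.Icc 0 Real.pi := by
      constructor
      · have := hθmono j (j+1) (by omega) (by omega)
        linarith
      · linarith [hθle (j+1), hθnn j]
    apply Real.injOn_cos hmem2 hmem1
    rw [hgap j hj]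
    have := hgap 0 (by omega)
    rw [h0, Real.sqrt_zero, Real.arcsin_zero, sub_zero] at this
    exact this.symm
  have e1 : ∑ j ∈ Finset.range (M-1), (θ (j+1) - θ j) = θ (M-1) - θ 0 :=
    Finset.sum_range_sub θ (M-1)
  have e2 : ∑ j ∈ Finset.range (M-1), (θ (j+1) - θ j)
      = ∑ _j ∈ Finset.range (M-1), θ 1 :=
    Finset.sum_congr rfl (fun j hj => hgapeq j (Finset.mem_range.1 hj))
  rw [Finset.sum_const, Finset.card_range, nsmul_eq_mul] at e2
  have e3 : ((M-1:ℕ):ℝ) = (M:ℝ)-1 := by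
    rw [Nat.cast_sub (by omega)]; norm_num
  rw [e1, hθ0, hθtop, sub_zero, e3] at e2
  have hM3 : (3:ℝ) ≤ (M:ℝ) := by exact_mod_cast hM
  have hθ1 : θ 1 = Real.pi / (2*((M:ℝ)-1)) := by
    rw [eq_div_iff (by linarith)]
    linarith
  have ht1a : 0 < u 1 := h0 ▸ hst 0 1 (by omega) (by omega)
  have ht1b : u 1 < 1 := h1 ▸ hst 1 (M-1) (by omega) le_rfl
  rw [← hθ1]
  rw [show Real.sin (θ 1) = Real.sqrt (u 1) from
    Real.sin_arcsin (by linarith [Real.sqrt_nonneg (u 1)]) (Real.sqrt_le_one.2 ht1b.le),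
    Real.sq_sqrt ht1a.le]

end Agg

/-- **Polynomial lower bound on the first level for nondecreasing weights.**
There is `C > 0` such that for all `M ≥ 3` and all positive nondecreasing weights
`g₁ ≤ ⋯ ≤ g_{M-2}`, the equalized solution `t*` for `g` satisfies `t*₁ ≥ C·M⁻³`;
in particular `t*₁` is at least the first level of the equalized solution with uniform
weights and the same number of levels. -/
theorem equalized_first_level_lower_bound_monotone :
    ∃ C : ℝ, 0 < C ∧ ∀ M : ℕ, 3 ≤ M →
      ∀ g : ℕ → ℝ, (∀ i, 1 ≤ i → i ≤ M - 2 → 0 < g i) →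
        (∀ i j, 1 ≤ i → i ≤ j → j ≤ M - 2 → g i ≤ g j) →
        ∀ t : ℕ → ℝ, IsEqualizedSol M g t →
          C / (M : ℝ) ^ 3 ≤ t 1 ∧
          ∀ u : ℕ → ℝ, IsEqualizedSol M (fun _ => (1 : ℝ)) u → u 1 ≤ t 1 := by
  refine ⟨1, one_pos, ?_⟩
  intro M hM g hgpos hgmono t ht
  obtain ⟨r, heq⟩ := ht
  obtain ⟨hge, hle, ht1⟩ := theta_facts hM hgpos hgmono heq
  set θ1 := Real.arcsin (Real.sqrt (t 1)) with hθ1def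
  set Δ := Real.pi / (2*((M:ℝ)-1)) with hΔdef
  have hpi := Real.pi_pos
  have hM3 : (3:ℝ) ≤ (M:ℝ) := by exact_mod_cast hM
  have hΔpos : 0 < Δ := div_pos hpi (by linarith)
  have hΔle : Δ ≤ Real.pi/2 :=
    div_le_div_of_nonneg_left hpi.le two_pos (by linarith)
  have hsin : Real.sin Δ ≤ Real.sin θ1 := by
    apply Real.strictMonoOn_sin.monotoneOn ⟨by linarith, by linarith⟩
      ⟨by linarith, hle⟩ hge
  have hsinΔ : 1/((M:ℝ)-1) ≤ Real.sin Δ := by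
    have h := Real.mul_le_sin (x := Δ) hΔpos.le hΔle
    have he : 2/Real.pi * Δ = 1/((M:ℝ)-1) := by
      rw [hΔdef]; field_simp
    linarith
  have hsinΔnn : 0 ≤ Real.sin Δ :=
    le_trans (le_of_lt (div_pos one_pos (by linarith))) hsinΔ
  constructor
  · rw [ht1]
    have h2 : (1/((M:ℝ)-1))^2 ≤ Real.sin θ1 ^ 2 :=
      pow_le_pow_left₀ (le_of_lt (div_pos one_pos (by linarith))) (le_trans hsinΔ hsin) 2
    have h3 : (1:ℝ)/(M:ℝ)^3 ≤ (1/((M:ℝ)-1))^2 := by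
      rw [div_pow, one_pow, div_le_div_iff₀ (pow_pos (by linarith : (0:ℝ) < (M:ℝ)) 3) (by nlinarith [hM3])]
      nlinarith [hM3]
    linarith
  · intro u hu
    obtain ⟨ru, huq⟩ := hu
    rw [uniform_first hM huq, ht1, ← hΔdef]
    exact pow_le_pow_left₀ hsinΔnn hsin 2
end

section
/- For each M ≥ 3 let t^M = (t^M_0,…,t^M_{M−1}) be the equalized solution with uniform weights and M levels, and define the step function β_M : [0,1) → [0,1] by β_M(θ) = t^M_{⌊Mθ⌋}. Then for every positive integer C there exists a function β : [0,1) → [0,1] such that β_{C·2^N + 1} converges to β uniformly on [0,1) as N → ∞. -/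
open Real

lemma equalized_unique (m : ℕ) (hm : 2 ≤ m) (t : ℕ → ℝ)
    (ht : IsEqualizedSol (m + 1) (fun _ => 1) t) :
    ∀ i ≤ m, t i = Real.sin ((i : ℝ) * π / (2 * m)) ^ 2 := by
  obtain ⟨r, h0, h1, hmono, hrate⟩ := ht
  simp only [Nat.add_sub_cancel] at h1 hmono hrate
  have mono : ∀ j, j ≤ m → ∀ i, i < j → t i < t j := by
    intro j
    induction j with
    | zero => intro _ i h; omega
    | succ j ih =>
      intro hj i hij
      rcases Nat.lt_succ_iff_lt_or_eq.mp hij with h | h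
      · exact lt_trans (ih (by omega) i h) (hmono j (by omega))
      · subst h; exact hmono i (by omega)
  have t_nonneg : ∀ i ≤ m, 0 ≤ t i := by
    intro i hi
    rcases Nat.eq_zero_or_pos i with h | h
    · simp [h, h0]
    · exact le_of_lt (h0 ▸ mono i hi 0 h)
  have t_le_one : ∀ i ≤ m, t i ≤ 1 := by
    intro i hi
    rcases eq_or_lt_of_le hi with h | h
    · simp [h, h1]
    · exact le_of_lt (h1 ▸ mono m le_rfl i h)
  set α : ℕ → ℝ := fun i => Real.arcsin (Real.sqrt (t i)) with hα
  have hsin : ∀ i ≤ m, Real.sin (α i) = Real.sqrt (t i) := by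
    intro i hi
    exact Real.sin_arcsin (le_trans (by norm_num) (Real.sqrt_nonneg _))
      (Real.sqrt_le_one.mpr (t_le_one i hi))
  have hsinsq : ∀ i ≤ m, Real.sin (α i) ^ 2 = t i := by
    intro i hi
    rw [hsin i hi, Real.sq_sqrt (t_nonneg i hi)]
  have hcos : ∀ i ≤ m, Real.cos (α i) = Real.sqrt (1 - t i) := by
    intro i hi
    rw [hα]
    rw [Real.cos_arcsin, Real.sq_sqrt (t_nonneg i hi)]
  have hα0 : α 0 = 0 := by simp [hα, h0]
  have hαm : α m = π / 2 := by simp [hα, h1]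
  have hα_nonneg : ∀ i, 0 ≤ α i := fun i =>
    Real.arcsin_nonneg.mpr (Real.sqrt_nonneg _)
  have hα_le : ∀ i, α i ≤ π / 2 := fun i => Real.arcsin_le_pi_div_two _
  have hαmono : ∀ i j : ℕ, i < j → j ≤ m → α i < α j := by
    intro i j hij hj
    apply Real.strictMonoOn_arcsin
    · exact ⟨le_trans (by norm_num) (Real.sqrt_nonneg _),
        Real.sqrt_le_one.mpr (t_le_one i (by omega))⟩
    · exact ⟨le_trans (by norm_num) (Real.sqrt_nonneg _),
        Real.sqrt_le_one.mpr (t_le_one j hj)⟩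
    · exact Real.sqrt_lt_sqrt (t_nonneg i (by omega)) (mono j hj i hij)
  have key : ∀ i, 1 ≤ i → i ≤ m → rateAt (m + 1) (fun _ => 1) t i
      = -2 * Real.log (Real.cos (α i - α (i - 1))) := by
    intro i hi1 him
    rcases eq_or_lt_of_le hi1 with h1' | h1'
    · -- i = 1
      have e : rateAt (m + 1) (fun _ => (1 : ℝ)) t 1
          = -(1 : ℝ) * Real.log (1 - t 1) := by simp [rateAt]
      rw [← h1', e]
      rw [show (1 : ℕ) - 1 = 0 from rfl, hα0, sub_zero]
      rw [hcos 1 (by omega), Real.log_sqrt (by linarith [t_le_one 1 (by omega)])]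
      ring
    · rcases eq_or_lt_of_le him with h2' | h2'
      · -- i = m
        have e : rateAt (m + 1) (fun _ => (1 : ℝ)) t i
            = -(1 : ℝ) * Real.log (t (m + 1 - 2)) := by
          simp only [rateAt]
          rw [if_neg (by omega), if_pos (by omega)]
        rw [e]
        have hm2 : m + 1 - 2 = i - 1 := by omega
        rw [hm2]
        rw [show α i = π / 2 from h2' ▸ hαm]
        have hi1m : i - 1 ≤ m := by omega
        rw [Real.cos_pi_div_two_sub, hsin _ hi1m,
          Real.log_sqrt (t_nonneg _ hi1m)]
        ring
      · -- middle
        have e : rateAt (m + 1) (fun _ => (1 : ℝ)) t i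
            = pairRate 1 1 (t (i - 1)) (t i) := by
          simp only [rateAt]
          rw [if_neg (by omega), if_neg (by omega)]
        rw [e, pairRate]
        have hsum : (1 - t (i - 1)) ^ ((1 : ℝ) / (1 + 1)) * (1 - t i) ^ ((1 : ℝ) / (1 + 1))
            + t (i - 1) ^ ((1 : ℝ) / (1 + 1)) * t i ^ ((1 : ℝ) / (1 + 1))
            = Real.cos (α i - α (i - 1)) := by
          rw [Real.cos_sub]
          rw [show (1 : ℝ) / (1 + 1) = 1 / 2 by norm_num]
          rw [← Real.sqrt_eq_rpow, ← Real.sqrt_eq_rpow, ← Real.sqrt_eq_rpow,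
            ← Real.sqrt_eq_rpow]
          rw [hcos (i - 1) (by omega), hcos i (by omega),
            hsin (i - 1) (by omega), hsin i (by omega)]
          ring
        rw [hsum]
        norm_num
  have gap_nonneg : ∀ i, 1 ≤ i → i ≤ m → 0 ≤ α i - α (i - 1) := by
    intro i hi1 him
    have := hαmono (i - 1) i (by omega) him
    linarith
  have gap_le : ∀ i, 1 ≤ i → i ≤ m → α i - α (i - 1) ≤ π / 2 := by
    intro i hi1 him
    have := hα_nonneg (i - 1)
    have := hα_le i
    linarith
  have cos_gap_nonneg : ∀ i, 1 ≤ i → i ≤ m → 0 ≤ Real.cos (α i - α (i - 1)) := by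
    intro i hi1 him
    apply Real.cos_nonneg_of_mem_Icc
    constructor
    · have := gap_nonneg i hi1 him; have := Real.pi_pos; linarith
    · exact gap_le i hi1 him
  have hα1pos : 0 < α 1 := hα0 ▸ hαmono 0 1 (by omega) (by omega)
  have hα1lt : α 1 < π / 2 := hαm ▸ hαmono 1 m (by omega) le_rfl
  have hcos1pos : 0 < Real.cos (α 1) :=
    Real.cos_pos_of_mem_Ioo ⟨by have := Real.pi_pos; linarith, hα1lt⟩
  have hcos1lt : Real.cos (α 1) < 1 := by
    calc Real.cos (α 1) < Real.cos 0 := by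
          apply Real.cos_lt_cos_of_nonneg_of_le_pi le_rfl
            (by have := Real.pi_pos; linarith) hα1pos
    _ = 1 := Real.cos_zero
  have hr1 : -2 * Real.log (Real.cos (α 1)) = r := by
    have h := hrate 1 le_rfl (by omega)
    rw [key 1 le_rfl (by omega)] at h
    rw [show (1 : ℕ) - 1 = 0 from rfl, hα0, sub_zero] at h
    exact h
  have hrpos : 0 < r := by
    rw [← hr1]
    have := Real.log_neg hcos1pos hcos1lt
    linarith
  have gap_eq : ∀ i, 1 ≤ i → i ≤ m → α i - α (i - 1) = α 1 := by
    intro i hi1 him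
    have hre : -2 * Real.log (Real.cos (α i - α (i - 1))) = r := by
      rw [← key i hi1 him]; exact hrate i hi1 (by omega)
    have hcpos : 0 < Real.cos (α i - α (i - 1)) := by
      rcases eq_or_lt_of_le (cos_gap_nonneg i hi1 him) with h | h
      · exfalso
        rw [← h] at hre
        simp at hre
        linarith
      · exact h
    have hlogeq : Real.log (Real.cos (α i - α (i - 1)))
        = Real.log (Real.cos (α 1)) := by
      have := hre.trans hr1.symm
      linarith
    have hcoseq : Real.cos (α i - α (i - 1)) = Real.cos (α 1) :=
      Real.log_injOn_pos (Set.mem_Ioi.mpr hcpos) (Set.mem_Ioi.mpr hcos1pos) hlogeq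
    have hpi := Real.pi_pos
    exact Real.injOn_cos
      ⟨gap_nonneg i hi1 him, by linarith [gap_le i hi1 him]⟩
      ⟨le_of_lt hα1pos, by linarith⟩ hcoseq
  have hlin : ∀ i ≤ m, α i = (i : ℝ) * α 1 := by
    intro i
    induction i with
    | zero => intro _; simp [hα0]
    | succ i ih =>
      intro hi
      have hg := gap_eq (i + 1) (by omega) hi
      rw [show (i + 1) - 1 = i from rfl] at hg
      have hstep : α (i + 1) = α i + α 1 := by linarith
      rw [hstep, ih (by omega)]
      push_cast; ring
  have hm0 : (m : ℝ) ≠ 0 := Nat.cast_ne_zero.mpr (by omega)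
  have hδ : α 1 = π / (2 * m) := by
    have h := hlin m le_rfl
    rw [hαm] at h
    rw [eq_div_iff (by positivity)]
    linear_combination -2 * h
  intro i hi
  rw [← hsinsq i hi, hlin i hi, hδ]
  congr 2
  ring

lemma sin_sq_sub_sin_sq_abs (a b : ℝ) :
    |Real.sin a ^ 2 - Real.sin b ^ 2| ≤ 2 * |a - b| := by
  have h1 : |Real.sin a - Real.sin b| ≤ |a - b| := by
    rw [Real.sin_sub_sin, abs_mul, abs_mul]
    calc |(2 : ℝ)| * |Real.sin ((a - b) / 2)| * |Real.cos ((a + b) / 2)|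
        ≤ |(2 : ℝ)| * |(a - b) / 2| * 1 := by
          apply mul_le_mul
            (mul_le_mul le_rfl Real.abs_sin_le_abs (abs_nonneg _) (abs_nonneg _))
            (Real.abs_cos_le_one _) (abs_nonneg _) (by positivity)
    _ = |a - b| := by
          rw [abs_div]
          simp [abs_two]
          ring
  have h2 : |Real.sin a + Real.sin b| ≤ 2 := by
    calc |Real.sin a + Real.sin b| ≤ |Real.sin a| + |Real.sin b| := abs_add_le _ _
    _ ≤ 1 + 1 := add_le_add (Real.abs_sin_le_one _) (Real.abs_sin_le_one _)
    _ = 2 := by norm_num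
  calc |Real.sin a ^ 2 - Real.sin b ^ 2|
      = |Real.sin a - Real.sin b| * |Real.sin a + Real.sin b| := by
        rw [← abs_mul]; ring_nf
  _ ≤ |a - b| * 2 := mul_le_mul h1 h2 (abs_nonneg _) (abs_nonneg _)
  _ = 2 * |a - b| := mul_comm _ _

/-- **Uniform convergence of the optimal step functions along exponential subsequences.**
For each `M ≥ 3` let `t^M` be the equalized solution with uniform weights and `M` levels and
let `β_M(θ) = t^M_{⌊Mθ⌋}` on `[0,1)`.  Then for each positive integer `C` there is a function
`β` such that `β_{C·2^N+1} → β` uniformly on `[0,1)` as `N → ∞`. -/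
theorem equalized_step_functions_converge
    (T : ℕ → ℕ → ℝ)
    (hT : ∀ M : ℕ, 3 ≤ M → IsEqualizedSol M (fun _ => (1 : ℝ)) (T M)) :
    ∀ C : ℕ, 0 < C → ∃ β : ℝ → ℝ,
      TendstoUniformlyOn
        (fun (N : ℕ) (θ : ℝ) => T (C * 2 ^ N + 1) ⌊((C * 2 ^ N + 1 : ℕ) : ℝ) * θ⌋₊)
        β Filter.atTop (Set.Ico (0 : ℝ) 1) := by
  intro C hC
  refine ⟨fun θ => Real.sin (π * θ / 2) ^ 2, ?_⟩
  rw [Metric.tendstoUniformlyOn_iff]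
  intro ε hε
  have htend : Filter.Tendsto (fun N : ℕ => π * ((1 : ℝ) / 2) ^ N)
      Filter.atTop (nhds 0) := by
    have h := tendsto_pow_atTop_nhds_zero_of_lt_one
      (by norm_num : (0 : ℝ) ≤ 1 / 2) (by norm_num : (1 : ℝ) / 2 < 1)
    simpa using h.const_mul π
  have hev : ∀ᶠ N : ℕ in Filter.atTop, π * ((1 : ℝ) / 2) ^ N < ε :=
    htend.eventually (gt_mem_nhds hε)
  filter_upwards [hev, Filter.eventually_ge_atTop 1] with N hNe hN1
  intro θ hθ
  obtain ⟨hθ0, hθ1⟩ := hθ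
  set m : ℕ := C * 2 ^ N with hmdef
  have hm2 : 2 ≤ m := by
    calc 2 = 1 * 2 ^ 1 := by norm_num
    _ ≤ C * 2 ^ N := Nat.mul_le_mul hC (Nat.pow_le_pow_right (by norm_num) hN1)
  have hform := equalized_unique m hm2 (T (m + 1)) (hT (m + 1) (by omega))
  set k : ℕ := ⌊((m + 1 : ℕ) : ℝ) * θ⌋₊ with hk
  have hMθ0 : 0 ≤ ((m + 1 : ℕ) : ℝ) * θ := by positivity
  have hkm : k ≤ m := by
    have hlt : k < m + 1 := by
      rw [hk, Nat.floor_lt hMθ0]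
      calc ((m + 1 : ℕ) : ℝ) * θ < ((m + 1 : ℕ) : ℝ) * 1 := by
            apply mul_lt_mul_of_pos_left hθ1
            exact_mod_cast Nat.succ_pos m
      _ = ((m + 1 : ℕ) : ℝ) := mul_one _
    omega
  rw [Real.dist_eq, hform k hkm]
  have hk_le : (k : ℝ) ≤ ((m + 1 : ℕ) : ℝ) * θ := Nat.floor_le hMθ0
  have hk_gt : ((m + 1 : ℕ) : ℝ) * θ < (k : ℝ) + 1 := Nat.lt_floor_add_one _
  have hmpos : (0 : ℝ) < (m : ℝ) := by exact_mod_cast (by omega : 0 < m)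
  push_cast at hk_le hk_gt
  have habs1 : |(m : ℝ) * θ - (k : ℝ)| ≤ 1 := by
    rw [abs_le]
    constructor <;> nlinarith
  have hrw : π * θ / 2 - (k : ℝ) * π / (2 * (m : ℝ))
      = π / (2 * (m : ℝ)) * ((m : ℝ) * θ - (k : ℝ)) := by
    field_simp
  have hpi := Real.pi_pos
  have habs : |π * θ / 2 - (k : ℝ) * π / (2 * (m : ℝ))| ≤ π / (2 * (m : ℝ)) := by
    rw [hrw, abs_mul, abs_of_nonneg (by positivity : (0 : ℝ) ≤ π / (2 * (m : ℝ)))]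
    calc π / (2 * (m : ℝ)) * |(m : ℝ) * θ - (k : ℝ)|
        ≤ π / (2 * (m : ℝ)) * 1 := by
          apply mul_le_mul_of_nonneg_left habs1 (by positivity)
    _ = π / (2 * (m : ℝ)) := mul_one _
  have hmain := sin_sq_sub_sin_sq_abs (π * θ / 2) ((k : ℝ) * π / (2 * (m : ℝ)))
  have h2N : (2 : ℝ) ^ N ≤ (m : ℝ) := by
    have : 2 ^ N ≤ m := Nat.le_mul_of_pos_left _ hC
    exact_mod_cast this
  have hfinal : π / (m : ℝ) ≤ π * ((1 : ℝ) / 2) ^ N := by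
    rw [show π * ((1 : ℝ) / 2) ^ N = π / 2 ^ N by
      rw [one_div, inv_pow, ← div_eq_mul_inv]]
    gcongr
  calc |Real.sin (π * θ / 2) ^ 2 - Real.sin ((k : ℝ) * π / (2 * (m : ℝ))) ^ 2|
      ≤ 2 * |π * θ / 2 - (k : ℝ) * π / (2 * (m : ℝ))| := hmain
  _ ≤ 2 * (π / (2 * (m : ℝ))) := by linarith
  _ = π / (m : ℝ) := by field_simp
  _ < ε := lt_of_le_of_lt hfinal hNe
end

section
/- Let M ≥ 2. Over all vectors (s₀, s₁, …, s_M) with 0 = s₀ ≤ s₁ ≤ ⋯ ≤ s_M = 1, the objective G(s) = Σ_{1 ≤ i < j ≤ M} ( (s_j + s_{j−1})/2 − (s_i + s_{i−1})/2 )·(s_i − s_{i−1})·(s_j − s_{j−1}) is maximized at the equispaced vector s_i = i/M. -/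
/-- The Spearman-ρ asymptotic objective for a partition `0 = s₀ ≤ ⋯ ≤ s_M = 1`:
`G(s) = Σ_{1 ≤ i < j ≤ M} ((s_j + s_{j-1})/2 - (s_i + s_{i-1})/2)·(s_i - s_{i-1})·(s_j - s_{j-1})`. -/
noncomputable def spearmanObj (M : ℕ) (s : ℕ → ℝ) : ℝ :=
  ∑ j ∈ Finset.Icc 1 M, ∑ i ∈ Finset.Ico 1 j,
    ((s j + s (j - 1)) / 2 - (s i + s (i - 1)) / 2) * (s i - s (i - 1)) * (s j - s (j - 1))

private lemma tele (f : ℕ → ℝ) (M : ℕ) :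
    ∑ i ∈ Finset.Icc 1 M, (f i - f (i - 1)) = f M - f 0 := by
  induction M with
  | zero => simp
  | succ n ih =>
    rw [Finset.sum_Icc_succ_top (by omega), ih]
    simp

private lemma spearman_formula (M : ℕ) (s : ℕ → ℝ) (h0 : s 0 = 0) (h1 : s M = 1) :
    spearmanObj M s = 1 / 6 - (∑ j ∈ Finset.Icc 1 M, (s j - s (j - 1)) ^ 3) / 6 := by
  unfold spearmanObj
  have key : ∀ j ∈ Finset.Icc 1 M,
      ∑ i ∈ Finset.Ico 1 j,
        ((s j + s (j - 1)) / 2 - (s i + s (i - 1)) / 2) * (s i - s (i - 1)) * (s j - s (j - 1))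
      = (s j ^ 3 - s (j - 1) ^ 3) / 6 - (s j - s (j - 1)) ^ 3 / 6 := by
    intro j hj
    simp only [Finset.mem_Icc] at hj
    have hIco : Finset.Ico 1 j = Finset.Icc 1 (j - 1) := by
      rw [← Finset.Ico_add_one_right_eq_Icc]
      congr 1
      omega
    set g : ℕ → ℝ := fun i =>
      ((s j + s (j - 1)) / 2 * s i - s i ^ 2 / 2) * (s j - s (j - 1)) with hg
    calc ∑ i ∈ Finset.Ico 1 j,
          ((s j + s (j - 1)) / 2 - (s i + s (i - 1)) / 2) * (s i - s (i - 1)) * (s j - s (j - 1))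
        = ∑ i ∈ Finset.Icc 1 (j - 1), (g i - g (i - 1)) := by
          rw [hIco]
          exact Finset.sum_congr rfl fun i _ => by simp only [hg]; ring
      _ = g (j - 1) - g 0 := tele g (j - 1)
      _ = (s j ^ 3 - s (j - 1) ^ 3) / 6 - (s j - s (j - 1)) ^ 3 / 6 := by
          simp only [hg, h0]; ring
  rw [Finset.sum_congr rfl key, Finset.sum_sub_distrib,
    show (∑ j ∈ Finset.Icc 1 M, ((s j ^ 3 - s (j - 1) ^ 3) / 6))
      = ∑ j ∈ Finset.Icc 1 M, ((fun i => s i ^ 3 / 6) j - (fun i => s i ^ 3 / 6) (j - 1)) by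
        exact Finset.sum_congr rfl fun j _ => by ring,
    tele (fun i => s i ^ 3 / 6) M, h0, h1]
  rw [Finset.sum_div]
  ring

/-- **Equispaced partitions maximize the Spearman-ρ objective.** -/
theorem spearman_objective_maximized_at_equispaced
    (M : ℕ) (hM : 2 ≤ M) (s : ℕ → ℝ)
    (h0 : s 0 = 0) (h1 : s M = 1) (hmono : ∀ i, i < M → s i ≤ s (i + 1)) :
    spearmanObj M s ≤ spearmanObj M (fun i => (i : ℝ) / M) := by
  have hM0 : (M : ℝ) ≠ 0 := by positivity
  have heq : spearmanObj M (fun i => (i : ℝ) / M) = 1 / 6 - (1 / (M : ℝ) ^ 2) / 6 := by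
    rw [spearman_formula M _ (by simp) (by field_simp)]
    have : ∑ j ∈ Finset.Icc 1 M, (((j : ℝ) / M) - (((j - 1 : ℕ) : ℝ) / M)) ^ 3
        = ∑ j ∈ Finset.Icc 1 M, (1 / (M : ℝ)) ^ 3 := by
      refine Finset.sum_congr rfl fun j hj => ?_
      simp only [Finset.mem_Icc] at hj
      rw [Nat.cast_sub (by omega)]
      push_cast
      ring
    rw [this, Finset.sum_const, Nat.card_Icc]
    simp only [nsmul_eq_mul]
    rw [Nat.cast_sub (by omega)]
    push_cast
    field_simp
    ring
  rw [heq, spearman_formula M s h0 h1]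
  have hd : ∀ j ∈ Finset.Icc 1 M, (0 : ℝ) ≤ s j - s (j - 1) := by
    intro j hj
    simp only [Finset.mem_Icc] at hj
    have := hmono (j - 1) (by omega)
    rw [show j - 1 + 1 = j by omega] at this
    linarith
  have hsum : ∑ j ∈ Finset.Icc 1 M, (s j - s (j - 1)) = 1 := by
    rw [tele s M, h0, h1]; ring
  have hold := pow_sum_div_card_le_sum_pow (s := Finset.Icc 1 M)
    (f := fun j => s j - s (j - 1)) hd 2
  rw [hsum, Nat.card_Icc, one_pow] at hold
  have hcard : ((M + 1 - 1 : ℕ) : ℝ) = (M : ℝ) := by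
    rw [Nat.cast_sub (by omega)]; push_cast; ring
  rw [hcard] at hold
  norm_num at hold
  have hMpos : (0:ℝ) < (M:ℝ) ^ 2 := by positivity
  have : 1 / (M : ℝ) ^ 2 ≤ ∑ j ∈ Finset.Icc 1 M, (s j - s (j - 1)) ^ 3 := by
    rw [one_div]; exact hold
  linarith [this]
end

section
/- Let 0 < t₁ < t₂ < 1 and set c = [ (√(1−t₂) − √(1−t₁)) / (√t₁ − √t₂) ]². Then [ √( (1 − c/(1+c))·(1−t₂) ) + √( (c/(1+c))·t₂ ) ]² = (1/2)·[ 1 + √((1−t₁)(1−t₂)) + √(t₁·t₂) ]. -/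
/-- **Doubling identity for the pairwise rate.**
For `0 < t₁ < t₂ < 1` and `c = [(√(1-t₂) - √(1-t₁))/(√t₁ - √t₂)]²`,
`[√((1 - c/(1+c))(1-t₂)) + √((c/(1+c))·t₂)]² = (1/2)·[1 + √((1-t₁)(1-t₂)) + √(t₁t₂)]`. -/
theorem doubling_rate_identity
    (t₁ t₂ : ℝ) (h0 : 0 < t₁) (h12 : t₁ < t₂) (h1 : t₂ < 1)
    (c : ℝ)
    (hc : c = ((Real.sqrt (1 - t₂) - Real.sqrt (1 - t₁)) /
      (Real.sqrt t₁ - Real.sqrt t₂)) ^ 2) :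
    (Real.sqrt ((1 - c / (1 + c)) * (1 - t₂)) + Real.sqrt ((c / (1 + c)) * t₂)) ^ 2
      = (1 / 2) * (1 + Real.sqrt ((1 - t₁) * (1 - t₂)) + Real.sqrt (t₁ * t₂)) := by
  set a := Real.sqrt t₁ with ha
  set b := Real.sqrt t₂ with hb
  set u := Real.sqrt (1 - t₁) with hu
  set v := Real.sqrt (1 - t₂) with hv
  have h01 : t₁ < 1 := h12.trans h1
  have h02 : 0 < t₂ := h0.trans h12
  have ha2 : a ^ 2 = t₁ := Real.sq_sqrt h0.le
  have hb2 : b ^ 2 = t₂ := Real.sq_sqrt h02.le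
  have hu2 : u ^ 2 = 1 - t₁ := Real.sq_sqrt (by linarith)
  have hv2 : v ^ 2 = 1 - t₂ := Real.sq_sqrt (by linarith)
  have ha0 : 0 ≤ a := Real.sqrt_nonneg _
  have hb0 : 0 ≤ b := Real.sqrt_nonneg _
  have hu0 : 0 ≤ u := Real.sqrt_nonneg _
  have hv0 : 0 ≤ v := Real.sqrt_nonneg _
  have hab : a < b := Real.sqrt_lt_sqrt h0.le h12
  have hvu : v < u := Real.sqrt_lt_sqrt (by linarith) (by linarith)
  have hba : (0:ℝ) < b - a := sub_pos.2 hab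
  have huv : (0:ℝ) < u - v := sub_pos.2 hvu
  have hD : 0 < 1 - a*b - u*v := by
    nlinarith [sq_nonneg (u - v), mul_pos hba hba, ha2, hb2, hu2, hv2]
  have hbane : (b - a) ≠ 0 := ne_of_gt hba
  have hDne : (2 * (1 - a*b - u*v)) ≠ 0 := by positivity
  have hcval : c = ((u - v)/(b - a))^2 := by
    rw [hc, show v - u = -(u - v) by ring, show a - b = -(b - a) by ring,
      neg_div_neg_eq]
  have h1c : 1 + c = 2 * (1 - a*b - u*v) / (b - a)^2 := by
    rw [hcval]
    field_simp
    linear_combination ha2 + hb2 + hu2 + hv2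
  have hfrac : c/(1+c) = (u - v)^2 / (2 * (1 - a*b - u*v)) := by
    rw [h1c, hcval]
    field_simp
  have h1frac : 1 - c/(1+c) = (b - a)^2 / (2 * (1 - a*b - u*v)) := by
    rw [hfrac]
    field_simp
    linear_combination -ha2 - hb2 - hu2 - hv2
  have hsq2D : Real.sqrt (2 * (1 - a*b - u*v)) ^ 2 = 2 * (1 - a*b - u*v) :=
    Real.sq_sqrt (by positivity)
  have hsq2Dpos : 0 < Real.sqrt (2 * (1 - a*b - u*v)) :=
    Real.sqrt_pos.2 (by positivity)
  have e1 : Real.sqrt ((1 - c / (1 + c)) * (1 - t₂))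
      = (b - a) * v / Real.sqrt (2 * (1 - a*b - u*v)) := by
    rw [h1frac, ← hv2]
    rw [show (b - a)^2 / (2 * (1 - a*b - u*v)) * v^2
        = ((b - a) * v)^2 / (2 * (1 - a*b - u*v)) by ring]
    rw [Real.sqrt_div (by positivity), Real.sqrt_sq (by positivity)]
  have e2 : Real.sqrt ((c / (1 + c)) * t₂)
      = (u - v) * b / Real.sqrt (2 * (1 - a*b - u*v)) := by
    rw [hfrac, ← hb2]
    rw [show (u - v)^2 / (2 * (1 - a*b - u*v)) * b^2
        = ((u - v) * b)^2 / (2 * (1 - a*b - u*v)) by ring]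
    rw [Real.sqrt_div (by positivity), Real.sqrt_sq (by positivity)]
  have e3 : Real.sqrt ((1 - t₁) * (1 - t₂)) = u * v := by
    rw [← hu2, ← hv2, Real.sqrt_mul (by positivity), Real.sqrt_sq hu0, Real.sqrt_sq hv0]
  have e4 : Real.sqrt (t₁ * t₂) = a * b := by
    rw [← ha2, ← hb2, Real.sqrt_mul (by positivity), Real.sqrt_sq ha0, Real.sqrt_sq hb0]
  rw [e1, e2, e3, e4, ← add_div, div_pow, hsq2D]
  have key : b^2*u^2 + a^2*v^2 = 1 - a^2*b^2 - u^2*v^2 := by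
    rw [ha2, hb2, hu2, hv2]; ring
  rw [div_eq_iff hDne]
  linear_combination key
end
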